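/- arXiv:2504.05044 — 4 statements merged into one kernel-verified Lean document; each statement's English description precedes it below -/
import Mathlib

section
/- Let ρ̄ be a probability measure on ℝ^d and let φ ∈ L^∞(ℝ^d × ℝ^d) satisfy the two cancellation properties ∫ φ(x,y) ρ̄(dx) = 0 for all y and ∫ φ(x,y) ρ̄(dy) = 0 for all x, and suppose γ := C̃ ‖φ‖_{L^∞}^2 < 1 for a suitable universal constant C̃. Then sup over integers N > 2 of ∫_{ℝ^{dN}} exp( N | ⟨φ, μ_N ⊗ μ_N⟩ | ) ρ̄^{⊗N}(dx) ≤ 2/(1−γ) < ∞, where μ_N = (1/N) Σ_{i=1}^N δ_{x_i} for x = (x_1,…,x_N). -/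
set_option linter.unusedSectionVars false

open MeasureTheory Real Finset

private lemma pow_self_le (m : ℕ) : (m : ℝ) ^ m ≤ 3 ^ m * (Nat.factorial m : ℝ) := by
  induction m with
  | zero => norm_num
  | succ m IH =>
    rcases Nat.eq_zero_or_pos m with hm | hm
    · subst hm; norm_num
    · have hm' : (0:ℝ) < m := by exact_mod_cast hm
      have key : ((m:ℝ) + 1) ^ m ≤ 3 * (m:ℝ) ^ m := by
        have h1 : ((m:ℝ) + 1) = (m:ℝ) * (1 + 1 / m) := by field_simp
        have h2 : (1 + 1 / (m:ℝ)) ≤ Real.exp (1 / m) := by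
          have := Real.add_one_le_exp (1 / (m:ℝ)); linarith
        have h3 : (1 + 1 / (m:ℝ)) ^ m ≤ Real.exp (1 / m) ^ m := by
          apply pow_le_pow_left₀ (by positivity) h2
        have h4 : Real.exp (1 / (m:ℝ)) ^ m = Real.exp 1 := by
          rw [← Real.exp_nat_mul]
          congr 1
          field_simp
        have h5 : Real.exp 1 ≤ 3 := by
          have := Real.exp_one_lt_d9; linarith
        calc ((m:ℝ) + 1) ^ m = (m:ℝ) ^ m * (1 + 1/m) ^ m := by rw [h1, mul_pow]
          _ ≤ (m:ℝ) ^ m * 3 := by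
              have := h3.trans (h4 ▸ h5)
              exact mul_le_mul_of_nonneg_left this (by positivity)
          _ = 3 * (m:ℝ) ^ m := by ring
      have IH' := IH
      have hpos : (0:ℝ) ≤ (m:ℝ) + 1 := by positivity
      calc ((m+1:ℕ) : ℝ) ^ (m+1) = ((m:ℝ)+1) * ((m:ℝ)+1) ^ m := by
            push_cast; ring
        _ ≤ ((m:ℝ)+1) * (3 * (m:ℝ) ^ m) := by
            exact mul_le_mul_of_nonneg_left key hpos
        _ ≤ ((m:ℝ)+1) * (3 * (3 ^ m * (Nat.factorial m : ℝ))) := by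
            have : (3:ℝ) * (m:ℝ)^m ≤ 3 * (3^m * (Nat.factorial m : ℝ)) := by
              nlinarith [IH']
            exact mul_le_mul_of_nonneg_left this hpos
        _ = 3 ^ (m+1) * (Nat.factorial (m+1) : ℝ) := by
            rw [Nat.factorial_succ]; push_cast; ring

private lemma key_fact_ineq (m : ℕ) :
    ((256:ℝ) * (m:ℝ) ^ 2) ^ m ≤ 768 ^ m * (Nat.factorial (2*m) : ℝ) := by
  have h1 : (m:ℝ) ^ m * (m:ℝ) ^ m ≤ 3 ^ m * (Nat.factorial (2*m) : ℝ) := by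
    have h2 : (m:ℝ)^m ≤ 3 ^ m * (Nat.factorial m : ℝ) := pow_self_le m
    have h3 : (Nat.factorial m : ℝ) * ((m:ℝ)+1) ^ m ≤ (Nat.factorial (2*m) : ℝ) := by
      have := Nat.factorial_mul_pow_le_factorial (m := m) (n := m)
      have h4 : m + m = 2*m := by ring
      rw [h4] at this
      exact_mod_cast this
    have h5 : (m:ℝ)^m ≤ ((m:ℝ)+1)^m := by
      apply pow_le_pow_left₀ (by positivity); linarith
    calc (m:ℝ)^m * (m:ℝ)^m ≤ (3 ^ m * (Nat.factorial m : ℝ)) * ((m:ℝ)+1)^m := by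
          apply mul_le_mul h2 h5 (by positivity) (by positivity)
      _ = 3 ^ m * ((Nat.factorial m : ℝ) * ((m:ℝ)+1)^m) := by ring
      _ ≤ 3 ^ m * (Nat.factorial (2*m) : ℝ) := by
          exact mul_le_mul_of_nonneg_left h3 (by positivity)
  calc ((256:ℝ) * (m:ℝ)^2)^m = 256^m * ((m:ℝ)^m * (m:ℝ)^m) := by
        rw [mul_pow, ← pow_mul, two_mul, pow_add]
    _ ≤ 256^m * (3^m * (Nat.factorial (2*m) : ℝ)) := by
        apply mul_le_mul_of_nonneg_left h1 (by positivity)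
    _ = 768^m * (Nat.factorial (2*m) : ℝ) := by
        rw [← mul_assoc, ← mul_pow]; norm_num

private lemma summable_even_pow (t : ℝ) :
    Summable (fun m : ℕ => t ^ (2*m) / Nat.factorial (2*m)) := by
  have h := Real.summable_pow_div_factorial t
  exact h.comp_injective (fun a b hab => by omega)

private lemma exp_abs_le_twice_cosh (t : ℝ) :
    Real.exp |t| ≤ 2 * ∑' m : ℕ, t ^ (2*m) / Nat.factorial (2*m) := by
  have hexp : ∀ s : ℝ, Real.exp s = ∑' n : ℕ, s ^ n / Nat.factorial n := by
    intro s
    rw [Real.exp_eq_exp_ℝ, NormedSpace.exp_eq_tsum_div]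
  have hsum : ∀ s : ℝ, Summable (fun n : ℕ => s ^ n / (Nat.factorial n : ℝ)) :=
    Real.summable_pow_div_factorial
  set f : ℕ → ℝ := fun n => t ^ n / Nat.factorial n + (-t) ^ n / Nat.factorial n with hf
  have hfsum : Summable f := (hsum t).add (hsum (-t))
  have heven : Summable (fun k : ℕ => f (2*k)) :=
    hfsum.comp_injective (fun a b hab => by omega)
  have hodd : Summable (fun k : ℕ => f (2*k+1)) :=
    hfsum.comp_injective (fun a b hab => by omega)
  have hsplit := tsum_even_add_odd heven hodd
  have hoddzero : ∀ k : ℕ, f (2*k+1) = 0 := by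
    intro k
    have : (-t) ^ (2*k+1) = -(t ^ (2*k+1)) := Odd.neg_pow ⟨k, by ring⟩ t
    simp only [hf, this, neg_div]
    ring
  have hevenval : ∀ k : ℕ, f (2*k) = 2 * (t ^ (2*k) / Nat.factorial (2*k)) := by
    intro k
    have : (-t) ^ (2*k) = t ^ (2*k) := Even.neg_pow (even_two_mul k) t
    simp only [hf, this]
    ring
  have htotal : Real.exp t + Real.exp (-t) = ∑' n, f n := by
    rw [hexp t, hexp (-t)]
    exact ((hsum t).tsum_add (hsum (-t))).symm
  have h2 : ∑' n, f n = 2 * ∑' m : ℕ, t ^ (2*m) / Nat.factorial (2*m) := by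
    rw [← hsplit]
    have e1 : ∑' k : ℕ, f (2*k+1) = 0 := by
      simp only [hoddzero]; exact tsum_zero
    have e2 : ∑' k : ℕ, f (2*k) = 2 * ∑' m : ℕ, t ^ (2*m) / Nat.factorial (2*m) := by
      simp only [hevenval]
      exact tsum_mul_left
    rw [e1, e2, add_zero]
  have habs : Real.exp |t| ≤ Real.exp t + Real.exp (-t) := by
    rcases abs_cases t with ⟨h, _⟩ | ⟨h, _⟩
    · rw [h]; nlinarith [Real.exp_pos (-t)]
    · rw [h]; nlinarith [Real.exp_pos t]
  rw [htotal, h2] at habs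
  exact habs

private lemma arith1 {b n : ℕ} (h : b ≤ n) : 2*n - b = (n - b) + n := by omega

private lemma arith2 {b n : ℕ} (h : b ≤ n) : b + (n - b) = n := by omega

-- counting: number of h : Fin (2n) → Fin ν such that no value is attained exactly once
-- is at most 2^(2n) * ((2n)^n * ν^n)
private lemma count_bound (ν n : ℕ) (hν : 0 < ν) :
    ((Finset.univ : Finset (Fin (2*n) → Fin ν)).filter
      (fun h => ∀ k : Fin ν, ((Finset.univ.filter fun s => h s = k).card ≠ 1))).card
    ≤ 2^(2*n) * ((2*n)^n * ν^n) := by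
  classical
  set D := Fin (2*n)
  by_cases hcase : 2*n ≤ ν
  swap
  · -- small ν : crude bound
    push_neg at hcase
    calc ((Finset.univ : Finset (D → Fin ν)).filter _).card
        ≤ (Finset.univ : Finset (D → Fin ν)).card := Finset.card_filter_le _ _
      _ = ν ^ (2*n) := by
          rw [Finset.card_univ, Fintype.card_fun, Fintype.card_fin, Fintype.card_fin]
      _ = ν ^ n * ν ^ n := by rw [← pow_add]; congr 1; ring
      _ ≤ (2*n)^n * ν^n := by
          apply Nat.mul_le_mul_right
          exact Nat.pow_le_pow_left (le_of_lt hcase) n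
      _ ≤ 2^(2*n) * ((2*n)^n * ν^n) := Nat.le_mul_of_pos_left _ (Nat.pow_pos (by norm_num))
  · -- main case: ν ≥ 2n
    -- first occurrence machinery
    have hmemcls : ∀ (h : D → Fin ν) (s : D), s ∈ Finset.univ.filter (fun t => h t = h s) := by
      intro h s; simp
    set fo : (D → Fin ν) → D → D := fun h s =>
      (Finset.univ.filter (fun t => h t = h s)).min' ⟨s, hmemcls h s⟩ with hfo
    have fo_mem : ∀ (h : D → Fin ν) (s : D), h (fo h s) = h s := by
      intro h s
      have := Finset.min'_mem (Finset.univ.filter (fun t => h t = h s)) ⟨s, hmemcls h s⟩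
      simpa using this
    have fo_le : ∀ (h : D → Fin ν) (s : D), fo h s ≤ s := by
      intro h s
      exact Finset.min'_le _ s (hmemcls h s)
    have fo_congr : ∀ (h : D → Fin ν) (s t : D), h s = h t → fo h s = fo h t := by
      intro h s t hst
      simp only [hfo, hst]
    -- the encoding map
    set Φ : (D → Fin ν) → (D → Fin ν ⊕ D) := fun h s =>
      if fo h s = s then Sum.inl (h s) else Sum.inr (fo h s) with hΦ
    have Φinj : Function.Injective Φ := by
      intro h1 h2 h12
      have key : ∀ v : ℕ, ∀ s : D, s.val = v → h1 s = h2 s := by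
        intro v
        induction v using Nat.strong_induction_on with
        | _ v IH =>
        intro s hsv
        have hs := congrFun h12 s
        by_cases c1 : fo h1 s = s
        · by_cases c2 : fo h2 s = s
          · simp only [hΦ, if_pos c1, if_pos c2] at hs
            exact Sum.inl.inj hs
          · simp only [hΦ, if_pos c1, if_neg c2] at hs
            exact absurd hs (by simp)
        · by_cases c2 : fo h2 s = s
          · simp only [hΦ, if_neg c1, if_pos c2] at hs
            exact absurd hs (by simp)
          · simp only [hΦ, if_neg c1, if_neg c2, Sum.inr.injEq] at hs
            have hlt : fo h1 s < s := lt_of_le_of_ne (fo_le h1 s) c1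
            have e1 : h1 s = h1 (fo h1 s) := (fo_mem h1 s).symm
            have e2 : h2 (fo h2 s) = h2 s := fo_mem h2 s
            have hvlt : (fo h1 s).val < v := by
              rw [← hsv]; exact hlt
            rw [e1, IH _ hvlt _ rfl, hs, e2]
      funext s
      exact key s.val s rfl
    -- the image lies in the "few inl's" set
    have Φimage : ∀ h : D → Fin ν,
        (∀ k : Fin ν, ((Finset.univ.filter fun s => h s = k).card ≠ 1)) →
        (Finset.univ.filter fun s => (Φ h s).isLeft = true).card ≤ n := by
      intro h hh
      have hL : (Finset.univ.filter fun s => (Φ h s).isLeft = true)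
          = (Finset.univ.filter fun s => fo h s = s) := by
        apply Finset.filter_congr
        intro s _
        by_cases c : fo h s = s <;> simp [hΦ, c]
      rw [hL]
      set F := Finset.univ.filter fun s : D => fo h s = s with hF
      -- each class has ≥ 2 elements; map F injectively into univ \ F
      have hcls2 : ∀ s : D, 2 ≤ (Finset.univ.filter (fun t => h t = h s)).card := by
        intro s
        have h1 : 0 < (Finset.univ.filter (fun t => h t = h s)).card :=
          Finset.card_pos.mpr ⟨s, hmemcls h s⟩
        have h2 := hh (h s)
        omega
      have hne : ∀ s : D, ((Finset.univ.filter (fun t => h t = h s)).erase s).Nonempty := by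
        intro s
        rw [← Finset.card_pos, Finset.card_erase_of_mem (hmemcls h s)]
        have := hcls2 s; omega
      set ψ : D → D := fun s => ((Finset.univ.filter (fun t => h t = h s)).erase s).min' (hne s)
        with hψ
      have hψmem : ∀ s, ψ s ≠ s ∧ h (ψ s) = h s := by
        intro s
        have := Finset.min'_mem _ (hne s)
        rw [Finset.mem_erase, Finset.mem_filter] at this
        exact ⟨this.1, this.2.2⟩
      have hmaps : ∀ s ∈ F, ψ s ∈ Finset.univ \ F := by
        intro s hs
        rw [Finset.mem_sdiff]
        refine ⟨Finset.mem_univ _, ?_⟩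
        rw [hF, Finset.mem_filter]
        rintro ⟨-, habs⟩
        rw [Finset.mem_filter] at hs
        have h1 : fo h (ψ s) = fo h s := fo_congr h _ _ (hψmem s).2
        rw [habs, hs.2] at h1
        exact (hψmem s).1 h1
      have hinj : Set.InjOn ψ F := by
        intro s hs s' hs' hss
        rw [hF, Finset.mem_coe, Finset.mem_filter] at hs hs'
        have e : h s = h s' := by
          rw [← (hψmem s).2, hss, (hψmem s').2]
        have := fo_congr h s s' e
        rw [hs.2, hs'.2] at this
        exact this
      have hcard := Finset.card_le_card_of_injOn ψ hmaps hinj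
      have hsd : (Finset.univ \ F).card = 2*n - F.card := by
        rw [Finset.card_sdiff_of_subset (Finset.subset_univ F), Finset.card_univ]
        simp [D]
      have hFle : F.card ≤ 2*n := by
        calc F.card ≤ Finset.univ.card := Finset.card_le_card (Finset.subset_univ F)
          _ = 2*n := by simp [D]
      omega
    -- now count
    set B := (Finset.univ : Finset (D → Fin ν ⊕ D)).filter
        (fun e => (Finset.univ.filter fun s => (e s).isLeft = true).card ≤ n) with hB
    have hsub : ((Finset.univ : Finset (D → Fin ν)).filter
        (fun h => ∀ k : Fin ν, ((Finset.univ.filter fun s => h s = k).card ≠ 1))).image Φ ⊆ B := by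
      intro e he
      rw [Finset.mem_image] at he
      obtain ⟨h, hh, rfl⟩ := he
      rw [Finset.mem_filter] at hh
      rw [hB, Finset.mem_filter]
      exact ⟨Finset.mem_univ _, Φimage h hh.2⟩
    have hcard1 : ((Finset.univ : Finset (D → Fin ν)).filter
        (fun h => ∀ k : Fin ν, ((Finset.univ.filter fun s => h s = k).card ≠ 1))).card ≤ B.card := by
      rw [← Finset.card_image_of_injective _ Φinj]
      exact Finset.card_le_card hsub
    refine hcard1.trans ?_
    -- count B fiberwise over the set of inl-positions
    have hBcard : B.card = ∑ T ∈ (Finset.univ : Finset (Finset D)).filter (fun T => T.card ≤ n),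
        (B.filter (fun e => (Finset.univ.filter fun s => (e s).isLeft = true) = T)).card := by
      apply Finset.card_eq_sum_card_fiberwise
      intro e he
      rw [hB, Finset.mem_coe, Finset.mem_filter] at he
      rw [Finset.mem_coe, Finset.mem_filter]
      exact ⟨Finset.mem_univ _, he.2⟩
    rw [hBcard]
    -- bound each fiber
    have hfiber : ∀ T : Finset D, T.card ≤ n →
        (B.filter (fun e => (Finset.univ.filter fun s => (e s).isLeft = true) = T)).card
        ≤ (2*n)^n * ν^n := by
      intro T hT
      -- inject into (T → Fin ν) × ((univ \ T) → D)
      set ι : (D → Fin ν ⊕ D) → ({s // s ∈ T} → Fin ν) × ({s // s ∈ Finset.univ \ T} → D) :=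
        fun e => (fun s => ((e s.1).getLeft?).getD ⟨0, hν⟩,
                  fun s => ((e s.1).getRight?).getD s.1) with hι
      have hinj : Set.InjOn ι
          (B.filter (fun e => (Finset.univ.filter fun s => (e s).isLeft = true) = T)) := by
        intro e1 he1 e2 he2 h12
        rw [Finset.mem_coe, Finset.mem_filter] at he1 he2
        have hiff1 : ∀ s : D, (e1 s).isLeft = true ↔ s ∈ T := by
          intro s; rw [← he1.2]; simp
        have hiff2 : ∀ s : D, (e2 s).isLeft = true ↔ s ∈ T := by
          intro s; rw [← he2.2]; simp
        funext s
        by_cases hs : s ∈ T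
        · obtain ⟨v1, hv1⟩ := Sum.isLeft_iff.mp ((hiff1 s).mpr hs)
          obtain ⟨v2, hv2⟩ := Sum.isLeft_iff.mp ((hiff2 s).mpr hs)
          have := congrFun (congrArg Prod.fst h12) ⟨s, hs⟩
          simp only [hι, hv1, hv2, Sum.getLeft?, Option.getD_some] at this
          rw [hv1, hv2, this]
        · have h1r : (e1 s).isRight = true := by
            rw [Sum.not_isLeft.symm]
            simp only [hiff1 s]; exact hs
          have h2r : (e2 s).isRight = true := by
            rw [Sum.not_isLeft.symm]
            simp only [hiff2 s]; exact hs
          obtain ⟨v1, hv1⟩ := Sum.isRight_iff.mp h1r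
          obtain ⟨v2, hv2⟩ := Sum.isRight_iff.mp h2r
          have hsmem : s ∈ Finset.univ \ T := by
            rw [Finset.mem_sdiff]; exact ⟨Finset.mem_univ _, hs⟩
          have := congrFun (congrArg Prod.snd h12) ⟨s, hsmem⟩
          simp only [hι, hv1, hv2, Sum.getRight?, Option.getD_some] at this
          rw [hv1, hv2, this]
      have hcard2 := Finset.card_le_card_of_injOn ι (fun e _ => Finset.mem_univ (ι e)) hinj
      rw [Finset.card_univ] at hcard2
      refine hcard2.trans ?_
      rw [Fintype.card_prod, Fintype.card_fun, Fintype.card_fun, Fintype.card_coe,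
        Fintype.card_coe, Fintype.card_fin]
      have hsdcard : (Finset.univ \ T).card = 2*n - T.card := by
        rw [Finset.card_sdiff_of_subset (Finset.subset_univ T), Finset.card_univ]
        simp [D]
      rw [hsdcard]
      have hDcard : Fintype.card D = 2*n := by simp [D]
      rw [hDcard]
      -- ν^(T.card) * (2n)^(2n - T.card) ≤ (2n)^n * ν^n
      have h2n : 2*n - T.card = (n - T.card) + n := arith1 hT
      rw [h2n, pow_add]
      have step1 : ν ^ T.card * (2*n) ^ (n - T.card) ≤ ν ^ n := by
        calc ν ^ T.card * (2*n) ^ (n - T.card) ≤ ν ^ T.card * ν ^ (n - T.card) := by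
              apply Nat.mul_le_mul_left
              exact Nat.pow_le_pow_left hcase _
          _ = ν ^ n := by
              rw [← pow_add]
              congr 1
              exact arith2 hT
      calc ν ^ T.card * ((2*n) ^ (n - T.card) * (2*n) ^ n)
          = (ν ^ T.card * (2*n) ^ (n - T.card)) * (2*n)^n := by ring
        _ ≤ ν ^ n * (2*n)^n := Nat.mul_le_mul_right _ step1
        _ = (2*n)^n * ν^n := by ring
    calc ∑ T ∈ (Finset.univ : Finset (Finset D)).filter (fun T => T.card ≤ n),
          (B.filter (fun e => (Finset.univ.filter fun s => (e s).isLeft = true) = T)).card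
        ≤ ∑ T ∈ (Finset.univ : Finset (Finset D)).filter (fun T => T.card ≤ n),
            (2*n)^n * ν^n := by
          apply Finset.sum_le_sum
          intro T hT
          rw [Finset.mem_filter] at hT
          exact hfiber T hT.2
      _ = ((Finset.univ : Finset (Finset D)).filter (fun T => T.card ≤ n)).card
            * ((2*n)^n * ν^n) := by rw [Finset.sum_const, smul_eq_mul]
      _ ≤ 2^(2*n) * ((2*n)^n * ν^n) := by
          apply Nat.mul_le_mul_right
          calc ((Finset.univ : Finset (Finset D)).filter (fun T => T.card ≤ n)).card
              ≤ (Finset.univ : Finset (Finset D)).card := Finset.card_filter_le _ _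
            _ = 2^(2*n) := by rw [Finset.card_univ, Fintype.card_finset, Fintype.card_fin]

variable {E : Type*} [MeasurableSpace E]

private lemma measurable_upd {N : ℕ} (k : Fin N) :
    Measurable (fun p : (Fin N → E) × E => Function.update p.1 k p.2) :=
  measurable_update'

private lemma map_update (ρ : Measure E) [IsProbabilityMeasure ρ] (N : ℕ) (k : Fin N) :
    Measure.map (fun p : (Fin N → E) × E => Function.update p.1 k p.2)
      ((Measure.pi fun _ : Fin N => ρ).prod ρ) = Measure.pi fun _ : Fin N => ρ := by
  symm
  apply Measure.pi_eq
  intro s hs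
  rw [Measure.map_apply (measurable_upd k) (MeasurableSet.univ_pi hs)]
  have hpre : (fun p : (Fin N → E) × E => Function.update p.1 k p.2) ⁻¹'
      (Set.pi Set.univ s)
      = (Set.pi Set.univ (Function.update s k Set.univ)) ×ˢ (s k) := by
    ext ⟨z, y⟩
    simp only [Set.mem_preimage, Set.mem_pi, Set.mem_univ, true_implies, Set.mem_prod]
    constructor
    · intro h
      refine ⟨fun i => ?_, ?_⟩
      · by_cases hik : i = k
        · subst hik; simp [Function.update_self]
        · rw [Function.update_of_ne hik]
          have := h i
          rwa [Function.update_of_ne hik] at this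
      · have := h k
        rwa [Function.update_self] at this
    · rintro ⟨h1, h2⟩ i
      by_cases hik : i = k
      · subst hik; rwa [Function.update_self]
      · rw [Function.update_of_ne hik]
        have := h1 i
        rwa [Function.update_of_ne hik] at this
  rw [hpre, Measure.prod_prod, Measure.pi_pi]
  have h1 : ∀ i : Fin N, ρ (Function.update s k Set.univ i)
      = Function.update (fun i => ρ (s i)) k 1 i := by
    intro i
    by_cases hik : i = k
    · subst hik; simp
    · rw [Function.update_of_ne hik, Function.update_of_ne hik]
  rw [Finset.prod_congr rfl (fun i _ => h1 i)]
  rw [Finset.prod_update_of_mem (Finset.mem_univ k)]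
  rw [Finset.prod_eq_mul_prod_sdiff_singleton_of_mem (Finset.mem_univ k) (fun i => ρ (s i))]
  ring

private lemma my_integrable {α : Type*} [MeasurableSpace α] (μ : Measure α)
    [IsFiniteMeasure μ] {f : α → ℝ} (hf : Measurable f) (C : ℝ) (h : ∀ x, |f x| ≤ C) :
    Integrable f μ :=
  (integrable_const C).mono' hf.aestronglyMeasurable
    (Filter.Eventually.of_forall (by simpa [Real.norm_eq_abs] using h))

private lemma integral_update (ρ : Measure E) [IsProbabilityMeasure ρ] {N : ℕ} (k : Fin N)
    {f : (Fin N → E) → ℝ} (hf : Measurable f) (C : ℝ) (hbd : ∀ x, |f x| ≤ C) :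
    ∫ x, f x ∂(Measure.pi fun _ : Fin N => ρ)
      = ∫ z, ∫ y, f (Function.update z k y) ∂ρ ∂(Measure.pi fun _ : Fin N => ρ) := by
  set P : Measure (Fin N → E) := Measure.pi fun _ : Fin N => ρ with hP
  have hmap := map_update ρ N k
  have hmeas : Measurable (fun p : (Fin N → E) × E => f (Function.update p.1 k p.2)) :=
    hf.comp (measurable_upd k)
  have hint : Integrable (fun p : (Fin N → E) × E => f (Function.update p.1 k p.2))
      (P.prod ρ) := my_integrable _ hmeas C (fun p => hbd _)
  calc ∫ x, f x ∂P
      = ∫ x, f x ∂(Measure.map (fun p : (Fin N → E) × E => Function.update p.1 k p.2)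
          (P.prod ρ)) := by rw [hmap]
    _ = ∫ p : (Fin N → E) × E, f (Function.update p.1 k p.2) ∂(P.prod ρ) :=
        integral_map (measurable_upd k).aemeasurable
          (hmap ▸ hf.aestronglyMeasurable)
    _ = ∫ z, ∫ y, f (Function.update z k y) ∂ρ ∂P := integral_prod _ hint

private lemma prod_phi_meas {φ : E → E → ℝ} (hφ : Measurable (Function.uncurry φ))
    {N n : ℕ} (g : Fin n → Fin N × Fin N) :
    Measurable (fun x : Fin N → E => ∏ a, φ (x (g a).1) (x (g a).2)) := by
  apply Finset.measurable_prod
  intro a _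
  have hpair : Measurable (fun x : Fin N → E => (x ((g a).1), x ((g a).2))) :=
    (measurable_pi_apply ((g a).1)).prodMk (measurable_pi_apply ((g a).2))
  exact hφ.comp hpair

private lemma prod_phi_bound {φ : E → E → ℝ} {Cφ : ℝ} (hbd : ∀ x y, |φ x y| ≤ Cφ)
    {N n : ℕ} (g : Fin n → Fin N × Fin N) (x : Fin N → E) :
    |∏ a, φ (x (g a).1) (x (g a).2)| ≤ Cφ ^ n := by
  rw [Finset.abs_prod]
  refine (Finset.prod_le_prod (fun a _ => abs_nonneg _) (fun a _ => hbd _ _)).trans ?_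
  rw [Finset.prod_const, Finset.card_univ, Fintype.card_fin]

private lemma integral_phi_prod_zero (ρ : Measure E) [IsProbabilityMeasure ρ]
    {φ : E → E → ℝ} (hφ : Measurable (Function.uncurry φ))
    {Cφ : ℝ} (hbd : ∀ x y, |φ x y| ≤ Cφ)
    (hc1 : ∀ y, ∫ x, φ x y ∂ρ = 0) (hc2 : ∀ x, ∫ y, φ x y ∂ρ = 0)
    {N n : ℕ} (g : Fin n → Fin N × Fin N) (k : Fin N) (a0 : Fin n) (b0 : Bool)
    (hone1 : ∀ a, (g a).1 = k ↔ (a = a0 ∧ b0 = true))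
    (hone2 : ∀ a, (g a).2 = k ↔ (a = a0 ∧ b0 = false)) :
    ∫ x, ∏ a, φ (x (g a).1) (x (g a).2) ∂(Measure.pi fun _ : Fin N => ρ) = 0 := by
  classical
  set f : (Fin N → E) → ℝ := fun x => ∏ a, φ (x (g a).1) (x (g a).2) with hfdef
  have hfm : Measurable f := prod_phi_meas hφ g
  have hfb : ∀ x, |f x| ≤ Cφ ^ n := fun x => prod_phi_bound hbd g x
  rw [integral_update ρ k hfm (Cφ ^ n) hfb]
  have h0 : ∀ z : Fin N → E, ∫ y, f (Function.update z k y) ∂ρ = 0 := by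
    intro z
    cases b0 with
    | true =>
      have h1 : (g a0).1 = k := (hone1 a0).mpr ⟨rfl, rfl⟩
      have h2 : (g a0).2 ≠ k := by
        intro hh
        exact absurd ((hone2 a0).mp hh).2 (by simp)
      have hn1 : ∀ a : Fin n, a ≠ a0 → (g a).1 ≠ k := by
        intro a ha hh; exact ha ((hone1 a).mp hh).1
      have hn2 : ∀ a : Fin n, a ≠ a0 → (g a).2 ≠ k := by
        intro a ha hh; exact ha ((hone2 a).mp hh).1
      have hprod : ∀ y : E, f (Function.update z k y)
          = φ y (z ((g a0).2)) * ∏ a ∈ Finset.univ.erase a0,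
              φ (z ((g a).1)) (z ((g a).2)) := by
        intro y
        simp only [hfdef]
        rw [← Finset.mul_prod_erase Finset.univ _ (Finset.mem_univ a0)]
        congr 1
        · rw [h1, Function.update_self, Function.update_of_ne h2]
        · apply Finset.prod_congr rfl
          intro a ha
          have hane := (Finset.mem_erase.mp ha).1
          rw [Function.update_of_ne (hn1 a hane), Function.update_of_ne (hn2 a hane)]
      simp only [hprod]
      rw [integral_mul_const, hc1 _, zero_mul]
    | false =>
      have h1 : (g a0).2 = k := (hone2 a0).mpr ⟨rfl, rfl⟩
      have h2 : (g a0).1 ≠ k := by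
        intro hh
        exact absurd ((hone1 a0).mp hh).2 (by simp)
      have hn1 : ∀ a : Fin n, a ≠ a0 → (g a).1 ≠ k := by
        intro a ha hh; exact ha ((hone1 a).mp hh).1
      have hn2 : ∀ a : Fin n, a ≠ a0 → (g a).2 ≠ k := by
        intro a ha hh; exact ha ((hone2 a).mp hh).1
      have hprod : ∀ y : E, f (Function.update z k y)
          = φ (z ((g a0).1)) y * ∏ a ∈ Finset.univ.erase a0,
              φ (z ((g a).1)) (z ((g a).2)) := by
        intro y
        simp only [hfdef]
        rw [← Finset.mul_prod_erase Finset.univ _ (Finset.mem_univ a0)]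
        congr 1
        · rw [h1, Function.update_self, Function.update_of_ne h2]
        · apply Finset.prod_congr rfl
          intro a ha
          have hane := (Finset.mem_erase.mp ha).1
          rw [Function.update_of_ne (hn1 a hane), Function.update_of_ne (hn2 a hane)]
      simp only [hprod]
      rw [integral_mul_const, hc2 _, zero_mul]
  simp only [h0, integral_zero]



private lemma moment_bound (ρ : Measure E) [IsProbabilityMeasure ρ]
    {φ : E → E → ℝ} (hφ : Measurable (Function.uncurry φ))
    {Cφ : ℝ} (hCφ0 : 0 ≤ Cφ) (hbd : ∀ x y, |φ x y| ≤ Cφ)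
    (hc1 : ∀ y, ∫ x, φ x y ∂ρ = 0) (hc2 : ∀ x, ∫ y, φ x y ∂ρ = 0)
    (N : ℕ) (hN : 0 < N) (n : ℕ) :
    ∫ x : Fin N → E, (∑ i : Fin N, ∑ j : Fin N, φ (x i) (x j)) ^ n
        ∂(Measure.pi fun _ : Fin N => ρ)
    ≤ ((2^(2*n) * ((2*n)^n * N^n) : ℕ) : ℝ) * Cφ ^ n := by
  classical
  set P : Measure (Fin N → E) := Measure.pi fun _ : Fin N => ρ with hP
  -- expansion of the power of the double sum
  have hrw : ∀ x : Fin N → E, (∑ i : Fin N, ∑ j : Fin N, φ (x i) (x j)) ^ n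
      = ∑ g : Fin n → Fin N × Fin N, ∏ a, φ (x ((g a).1)) (x ((g a).2)) := by
    intro x
    have hsum : (∑ i : Fin N, ∑ j : Fin N, φ (x i) (x j))
        = ∑ p : Fin N × Fin N, φ (x p.1) (x p.2) :=
      (Fintype.sum_prod_type (f := fun p : Fin N × Fin N => φ (x p.1) (x p.2))).symm
    rw [hsum]
    rw [Finset.sum_pow' Finset.univ (fun p : Fin N × Fin N => φ (x p.1) (x p.2)) n]
    rw [Fintype.piFinset_univ]
  have hint : ∀ g : Fin n → Fin N × Fin N,
      Integrable (fun x : Fin N → E => ∏ a, φ (x ((g a).1)) (x ((g a).2))) P :=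
    fun g => my_integrable P (prod_phi_meas hφ g) (Cφ ^ n) (prod_phi_bound hbd g)
  have step1 : ∫ x, (∑ i : Fin N, ∑ j : Fin N, φ (x i) (x j)) ^ n ∂P
      = ∑ g : Fin n → Fin N × Fin N, ∫ x, ∏ a, φ (x ((g a).1)) (x ((g a).2)) ∂P := by
    simp only [hrw]
    exact integral_finset_sum Finset.univ (fun g _ => hint g)
  rw [step1]
  -- slot structure
  set eqv : Fin (2*n) ≃ Fin n × Bool :=
    (finCongr (by ring : 2*n = n*2)).trans
      (finProdFinEquiv.symm.trans (Equiv.prodCongr (Equiv.refl (Fin n)) finTwoEquiv)) with heqv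
  set Tg : (Fin n → Fin N × Fin N) → Fin (2*n) → Fin N :=
    fun g t => if (eqv t).2 then (g ((eqv t).1)).1 else (g ((eqv t).1)).2 with hTg
  set A : Finset (Fin n → Fin N × Fin N) :=
    Finset.univ.filter (fun g => ∀ k : Fin N,
      ((Finset.univ.filter fun t => Tg g t = k).card ≠ 1)) with hA
  -- off A, integrals vanish
  have hzero : ∀ g : Fin n → Fin N × Fin N, g ∉ A →
      ∫ x, ∏ a, φ (x ((g a).1)) (x ((g a).2)) ∂P = 0 := by
    intro g hg
    rw [hA, Finset.mem_filter, not_and] at hg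
    have hg' := hg (Finset.mem_univ _)
    push_neg at hg'
    obtain ⟨k, hk⟩ := hg'
    obtain ⟨t0, ht0⟩ := Finset.card_eq_one.mp hk
    have hiff : ∀ t : Fin (2*n), Tg g t = k ↔ t = t0 := by
      intro t
      constructor
      · intro h
        have : t ∈ Finset.univ.filter fun t => Tg g t = k :=
          Finset.mem_filter.mpr ⟨Finset.mem_univ _, h⟩
        rw [ht0, Finset.mem_singleton] at this
        exact this
      · intro h
        subst h
        have : t ∈ ({t} : Finset (Fin (2*n))) := Finset.mem_singleton_self t
        rw [← ht0, Finset.mem_filter] at this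
        exact this.2
    set s0 := eqv t0 with hs0
    apply integral_phi_prod_zero ρ hφ hbd hc1 hc2 g k s0.1 s0.2
    · intro a
      have h1 : (g a).1 = Tg g (eqv.symm (a, true)) := by
        simp [hTg]
      rw [h1, hiff (eqv.symm (a, true)), Equiv.symm_apply_eq, ← hs0]
      constructor
      · intro hh
        rw [← hh]
        exact ⟨rfl, rfl⟩
      · rintro ⟨hh1, hh2⟩
        rw [Prod.ext_iff]
        exact ⟨hh1.symm ▸ rfl, hh2.symm ▸ rfl⟩
    · intro a
      have h1 : (g a).2 = Tg g (eqv.symm (a, false)) := by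
        simp [hTg]
      rw [h1, hiff (eqv.symm (a, false)), Equiv.symm_apply_eq, ← hs0]
      constructor
      · intro hh
        rw [← hh]
        exact ⟨rfl, rfl⟩
      · rintro ⟨hh1, hh2⟩
        rw [Prod.ext_iff]
        exact ⟨hh1.symm ▸ rfl, hh2.symm ▸ rfl⟩
  -- restrict the sum to A
  have step2 : ∑ g : Fin n → Fin N × Fin N, ∫ x, ∏ a, φ (x ((g a).1)) (x ((g a).2)) ∂P
      = ∑ g ∈ A, ∫ x, ∏ a, φ (x ((g a).1)) (x ((g a).2)) ∂P :=
    (Finset.sum_subset (Finset.filter_subset _ _) (fun g _ hg => hzero g hg)).symm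
  rw [step2]
  -- bound each term on A
  have hterm : ∀ g : Fin n → Fin N × Fin N,
      ∫ x, ∏ a, φ (x ((g a).1)) (x ((g a).2)) ∂P ≤ Cφ ^ n := by
    intro g
    have h1 : ‖∫ x, ∏ a, φ (x ((g a).1)) (x ((g a).2)) ∂P‖ ≤ Cφ ^ n * (P Set.univ).toReal := by
      apply norm_integral_le_of_norm_le_const
      exact Filter.Eventually.of_forall (fun x => by
        rw [Real.norm_eq_abs]; exact prod_phi_bound hbd g x)
    have h2 : (P Set.univ).toReal = 1 := by simp [hP]
    rw [h2, mul_one, Real.norm_eq_abs] at h1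
    exact (le_abs_self _).trans h1
  have step3 : ∑ g ∈ A, ∫ x, ∏ a, φ (x ((g a).1)) (x ((g a).2)) ∂P
      ≤ (A.card : ℝ) * Cφ ^ n := by
    have := Finset.sum_le_card_nsmul A _ (Cφ ^ n) (fun g _ => hterm g)
    rwa [nsmul_eq_mul] at this
  refine step3.trans ?_
  -- counting
  have hAcard : A.card ≤ 2^(2*n) * ((2*n)^n * N^n) := by
    have hinj : Function.Injective Tg := by
      intro g1 g2 h12
      funext a
      have e1 : (g1 a).1 = (g2 a).1 := by
        have := congrFun h12 (eqv.symm (a, true))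
        rw [hTg] at this
        simpa only [Equiv.apply_symm_apply, Bool.false_eq_true, ↓reduceIte] using this
      have e2 : (g1 a).2 = (g2 a).2 := by
        have := congrFun h12 (eqv.symm (a, false))
        rw [hTg] at this
        simpa only [Equiv.apply_symm_apply, Bool.false_eq_true, ↓reduceIte] using this
      exact Prod.ext e1 e2
    have hmaps : ∀ g ∈ A, Tg g ∈
        ((Finset.univ : Finset (Fin (2*n) → Fin N)).filter
          (fun h => ∀ k : Fin N, ((Finset.univ.filter fun s => h s = k).card ≠ 1))) := by
      intro g hg
      rw [hA, Finset.mem_filter] at hg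
      exact Finset.mem_filter.mpr ⟨Finset.mem_univ _, hg.2⟩
    have h1 : A.card ≤ ((Finset.univ : Finset (Fin (2*n) → Fin N)).filter
        (fun h => ∀ k : Fin N, ((Finset.univ.filter fun s => h s = k).card ≠ 1))).card :=
      Finset.card_le_card_of_injOn Tg hmaps (Function.Injective.injOn hinj)
    exact h1.trans (count_bound N n hN)
  have hcast : (A.card : ℝ) ≤ ((2^(2*n) * ((2*n)^n * N^n) : ℕ) : ℝ) := by
    exact_mod_cast hAcard
  exact mul_le_mul_of_nonneg_right hcast (pow_nonneg hCφ0 n)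

/-- Exponential law of large numbers (Jabin–Wang): there is a universal constant `C̃`
such that for any probability measure `ρ̄` on `ℝ^d`, any bounded `φ` with
`γ := C̃ ‖φ‖_∞² < 1` satisfying the two cancellations
`∫ φ(x,y) ρ̄(dx) = 0` and `∫ φ(x,y) ρ̄(dy) = 0`, one has for all `N > 2`
`∫ exp(N |⟨φ, μ_N ⊗ μ_N⟩|) dρ̄^{⊗N} ≤ 2/(1 − γ)`. -/
theorem stmt1 :
    ∃ Ctilde : ℝ, 0 < Ctilde ∧
      ∀ (d : ℕ) (ρ : Measure (Fin d → ℝ)), IsProbabilityMeasure ρ →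
      ∀ (φ : (Fin d → ℝ) → (Fin d → ℝ) → ℝ), Measurable (Function.uncurry φ) →
      ∀ Cφ : ℝ, (∀ x y, |φ x y| ≤ Cφ) →
      (∀ y, ∫ x, φ x y ∂ρ = 0) → (∀ x, ∫ y, φ x y ∂ρ = 0) →
      Ctilde * Cφ ^ 2 < 1 →
      ∀ N : ℕ, 2 < N →
        ∫⁻ x : Fin N → (Fin d → ℝ),
            ENNReal.ofReal
              (Real.exp ((N : ℝ) *
                |(1 / (N : ℝ) ^ 2) * ∑ i : Fin N, ∑ j : Fin N, φ (x i) (x j)|))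
          ∂(Measure.pi fun _ : Fin N => ρ)
        ≤ ENNReal.ofReal (2 / (1 - Ctilde * Cφ ^ 2)) := by
  refine ⟨768, by norm_num, ?_⟩
  intro d ρ hρ φ hφ Cφ hbd hc1 hc2 hγ1 N hN
  have hN0 : 0 < N := by omega
  have hNR : (0:ℝ) < N := by exact_mod_cast hN0
  have hCφ0 : 0 ≤ Cφ := le_trans (abs_nonneg _) (hbd (fun _ => 0) (fun _ => 0))
  set γ : ℝ := 768 * Cφ ^ 2 with hγdef
  have hγ0 : 0 ≤ γ := by positivity
  set P : Measure (Fin N → (Fin d → ℝ)) := Measure.pi fun _ : Fin N => ρ with hP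
  haveI : IsProbabilityMeasure P := by
    rw [hP]; infer_instance
  set S : (Fin N → (Fin d → ℝ)) → ℝ := fun x => ∑ i : Fin N, ∑ j : Fin N, φ (x i) (x j)
    with hSdef
  have hSm : Measurable S := by
    apply Finset.measurable_sum
    intro i _
    apply Finset.measurable_sum
    intro j _
    have hpair : Measurable (fun x : Fin N → (Fin d → ℝ) => (x i, x j)) :=
      (measurable_pi_apply i).prodMk (measurable_pi_apply j)
    exact hφ.comp hpair
  have hSb : ∀ x, |S x| ≤ (N:ℝ)^2 * Cφ := by
    intro x
    calc |S x| ≤ ∑ i : Fin N, |∑ j : Fin N, φ (x i) (x j)| :=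
          Finset.abs_sum_le_sum_abs _ _
      _ ≤ ∑ i : Fin N, ∑ j : Fin N, |φ (x i) (x j)| := by
          apply Finset.sum_le_sum
          intro i _
          exact Finset.abs_sum_le_sum_abs _ _
      _ ≤ ∑ _i : Fin N, ∑ _j : Fin N, Cφ := by
          apply Finset.sum_le_sum
          intro i _
          apply Finset.sum_le_sum
          intro j _
          exact hbd _ _
      _ = (N:ℝ)^2 * Cφ := by
          simp [Finset.sum_const, Finset.card_univ]
          ring
  -- the coefficients
  set c : ℕ → ℝ := fun m => 2 / ((Nat.factorial (2*m) : ℝ) * (N:ℝ)^(2*m)) with hc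
  have hcpos : ∀ m, 0 < c m := by
    intro m
    apply div_pos (by norm_num)
    apply mul_pos (by exact_mod_cast Nat.factorial_pos _) (by positivity)
  have hceq : ∀ (m : ℕ) (t : ℝ), 2 * ((t / N) ^ (2*m) / Nat.factorial (2*m)) = c m * t ^ (2*m) := by
    intro m t
    simp only [hc]
    rw [div_pow, div_div, mul_comm ((N:ℝ)^(2*m)) ((Nat.factorial (2*m) : ℝ))]
    ring
  have hnn : ∀ (m : ℕ) (x : Fin N → (Fin d → ℝ)), 0 ≤ c m * S x ^ (2*m) := by
    intro m x
    apply mul_nonneg (hcpos m).le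
    rw [pow_mul]
    positivity
  have hsumm : ∀ x, Summable (fun m : ℕ => c m * S x ^ (2*m)) := by
    intro x
    apply Summable.congr ((summable_even_pow (S x / N)).mul_left 2)
    intro m
    exact hceq m (S x)
  have hpt : ∀ x, Real.exp (|S x| / N) ≤ ∑' m : ℕ, c m * S x ^ (2*m) := by
    intro x
    have h1 := exp_abs_le_twice_cosh (S x / N)
    have h2 : |S x / (N:ℝ)| = |S x| / N := by
      rw [abs_div, abs_of_nonneg hNR.le]
    rw [h2] at h1
    refine h1.trans ?_
    rw [← tsum_mul_left]
    apply le_of_eq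
    exact tsum_congr (fun m => hceq m (S x))
  -- the per-term bound
  have hterm : ∀ m : ℕ, ∫⁻ x, ENNReal.ofReal (c m * S x ^ (2*m)) ∂P
      ≤ ENNReal.ofReal (2 * γ^m) := by
    intro m
    have hintm : Integrable (fun x => c m * S x ^ (2*m)) P := by
      apply my_integrable P ((hSm.pow_const (2*m)).const_mul (c m))
        (|c m| * ((N:ℝ)^2 * Cφ)^(2*m))
      intro x
      rw [abs_mul]
      apply mul_le_mul_of_nonneg_left _ (abs_nonneg _)
      rw [abs_pow]
      exact pow_le_pow_left₀ (abs_nonneg _) (hSb x) _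
    rw [← ofReal_integral_eq_lintegral_ofReal hintm
      (Filter.Eventually.of_forall (fun x => hnn m x))]
    apply ENNReal.ofReal_le_ofReal
    rw [MeasureTheory.integral_const_mul]
    -- moment bound
    have hmom := moment_bound ρ hφ hCφ0 hbd hc1 hc2 N hN0 (2*m)
    have hmono : c m * ∫ x, S x ^ (2*m) ∂P
        ≤ c m * (((2^(2*(2*m)) * ((2*(2*m))^(2*m) * N^(2*m)) : ℕ) : ℝ) * Cφ ^ (2*m)) :=
      mul_le_mul_of_nonneg_left hmom (hcpos m).le
    refine hmono.trans ?_
    -- arithmetic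
    set F : ℝ := (Nat.factorial (2*m) : ℝ) with hF
    have hFpos : 0 < F := by rw [hF]; exact_mod_cast Nat.factorial_pos _
    have hNP : (0:ℝ) < (N:ℝ)^(2*m) := by positivity
    have hK : ((2^(2*(2*m)) * ((2*(2*m))^(2*m) * N^(2*m)) : ℕ) : ℝ)
        = (256*(m:ℝ)^2)^m * (N:ℝ)^(2*m) := by
      push_cast
      have e1 : (2:ℝ)^(2*(2*m)) = 16^m := by
        rw [show 2*(2*m) = 4*m by ring, pow_mul]
        norm_num
      have e2 : ((2:ℝ)*(2*(m:ℝ)))^(2*m) = (16*(m:ℝ)^2)^m := by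
        rw [pow_mul]
        congr 1
        ring
      rw [e1, e2, ← mul_assoc, ← mul_pow]
      congr 2
      ring
    rw [hK]
    have heq : c m * ((256*(m:ℝ)^2)^m * (N:ℝ)^(2*m) * Cφ^(2*m))
        = 2 * ((256*(m:ℝ)^2)^m * Cφ^(2*m)) / F := by
      simp only [hc, ← hF]
      rw [div_mul_eq_mul_div, div_eq_div_iff (by positivity : (0:ℝ) < F * (N:ℝ)^(2*m)).ne' hFpos.ne']
      ring
    rw [heq]
    have hγm : γ^m = 768^m * Cφ^(2*m) := by
      rw [hγdef, mul_pow, ← pow_mul]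
    have hkey : (256*(m:ℝ)^2)^m * Cφ^(2*m) ≤ (768^m * F) * Cφ^(2*m) := by
      apply mul_le_mul_of_nonneg_right _ (by positivity)
      have := key_fact_ineq m
      rw [← hF] at this
      exact this
    calc 2 * ((256*(m:ℝ)^2)^m * Cφ^(2*m)) / F
        ≤ 2 * ((768^m * F) * Cφ^(2*m)) / F := by
          exact (div_le_div_iff_of_pos_right hFpos).mpr (by linarith)
      _ = 2 * (768^m * Cφ^(2*m)) := by
          field_simp
      _ = 2 * γ^m := by rw [hγm]
  -- main chain
  calc ∫⁻ x, ENNReal.ofReal (Real.exp ((N : ℝ) *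
          |(1 / (N : ℝ) ^ 2) * ∑ i : Fin N, ∑ j : Fin N, φ (x i) (x j)|)) ∂P
      = ∫⁻ x, ENNReal.ofReal (Real.exp (|S x| / N)) ∂P := by
        apply lintegral_congr
        intro x
        congr 2
        rw [hSdef, abs_mul, abs_of_nonneg (by positivity : (0:ℝ) ≤ 1/(N:ℝ)^2)]
        field_simp
    _ ≤ ∫⁻ x, ENNReal.ofReal (∑' m : ℕ, c m * S x ^ (2*m)) ∂P :=
        lintegral_mono (fun x => ENNReal.ofReal_le_ofReal (hpt x))
    _ = ∫⁻ x, ∑' m : ℕ, ENNReal.ofReal (c m * S x ^ (2*m)) ∂P := by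
        apply lintegral_congr
        intro x
        exact ENNReal.ofReal_tsum_of_nonneg (fun m => hnn m x) (hsumm x)
    _ = ∑' m : ℕ, ∫⁻ x, ENNReal.ofReal (c m * S x ^ (2*m)) ∂P := by
        apply lintegral_tsum
        intro m
        exact (ENNReal.measurable_ofReal.comp
          ((hSm.pow_const (2*m)).const_mul (c m))).aemeasurable
    _ ≤ ∑' m : ℕ, ENNReal.ofReal (2 * γ^m) := ENNReal.tsum_le_tsum hterm
    _ = ENNReal.ofReal (∑' m : ℕ, 2 * γ^m) := by
        refine (ENNReal.ofReal_tsum_of_nonneg (fun m => by positivity) ?_).symm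
        exact (summable_geometric_of_lt_one hγ0 hγ1).mul_left 2
    _ = ENNReal.ofReal (2 / (1 - γ)) := by
        rw [tsum_mul_left, tsum_geometric_of_lt_one hγ0 hγ1, div_eq_mul_inv]
end

section
/- Let ρ̄ be a probability measure on ℝ^d and φ ∈ L^∞(ℝ^d × ℝ^d) with ∫∫ ρ̄(dx) ρ̄(dy) φ(x,y) = 0 and ‖φ‖_{L^∞} small enough so that α₀ := e^9 ‖φ‖²_{L^∞} < 1 and β₀ := 4e ‖φ‖²_{L^∞} < 1. Then for all N ≥ 2, ∫_{ℝ^{dN}} exp( N | ⟨φ, μ_N ⊗ μ_N⟩ |² ) ρ̄^{⊗N}(dx) ≤ 1 + α₀/(1−α₀) + β₀/(1−β₀). -/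
set_option maxHeartbeats 1000000

open MeasureTheory Real Finset



section Enc
variable {S V : Type*} [Fintype S] [LinearOrder S] [DecidableEq V]

noncomputable def enc (v : S → V) : S → V ⊕ S := fun s =>
  if h : ∃ s', s' < s ∧ v s' = v s then .inr h.choose else .inl (v s)

lemma enc_isRight (v : S → V) (s : S) :
    (enc v s).isRight = true ↔ ∃ s', s' < s ∧ v s' = v s := by
  unfold enc; split <;> simp_all

lemma enc_injective : Function.Injective (enc : (S → V) → S → V ⊕ S) := by
  intro v w h
  funext s
  induction s using WellFoundedLT.induction with
  | _ s ih =>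
    have hs := congrFun h s
    unfold enc at hs
    split at hs <;> split at hs
    · next h1 h2 =>
      injection hs with hs
      have e1 := h1.choose_spec
      have e2 := h2.choose_spec
      rw [← e1.2, hs, ih _ e2.1, e2.2]
    · simp at hs
    · simp at hs
    · injection hs

lemma card_image_eq_card_not_right (v : S → V) :
    (univ.image v).card = (univ.filter fun s => ¬ (enc v s).isRight = true).card := by
  classical
  have himg : univ.image v = (univ.filter fun s => ¬ (enc v s).isRight = true).image v := by
    apply le_antisymm
    · intro x hx
      simp only [mem_image] at hx ⊢
      obtain ⟨s, _, rfl⟩ := hx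
      have hne : (univ.filter fun t => v t = v s).Nonempty := ⟨s, by simp⟩
      set m := (univ.filter fun t => v t = v s).min' hne with hm
      have hmmem := (univ.filter fun t => v t = v s).min'_mem hne
      simp only [mem_filter] at hmmem
      refine ⟨m, ?_, hmmem.2⟩
      simp only [mem_filter, mem_univ, true_and, enc_isRight]
      rintro ⟨s', hlt, heq⟩
      have : m ≤ s' := Finset.min'_le _ _ (by simp [heq, hmmem.2, hm])
      exact absurd (lt_of_le_of_lt this hlt) (lt_irrefl m)
    · exact Finset.image_subset_image (Finset.filter_subset _ _)
  rw [himg]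
  apply Finset.card_image_of_injOn
  intro s hs t ht hst
  simp only [coe_filter, Set.mem_setOf_eq, mem_univ, true_and, enc_isRight] at hs ht
  by_contra hne
  rcases lt_or_gt_of_ne hne with hlt | hlt
  · exact ht ⟨s, hlt, hst⟩
  · exact hs ⟨t, hlt, hst.symm⟩

lemma card_image_add_card_right (v : S → V) :
    (univ.image v).card + (univ.filter fun s => (enc v s).isRight = true).card
      = Fintype.card S := by
  classical
  rw [card_image_eq_card_not_right, add_comm,
    Finset.card_filter_add_card_filter_not, Finset.card_univ]

end Enc

section Count
variable {S V : Type*} [Fintype S] [LinearOrder S] [DecidableEq V] [Fintype V]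
  [Nonempty S] [Nonempty V]

lemma card_fiber_le (A : Finset S) :
    ((univ.filter fun g : S → V ⊕ S =>
        (univ.filter fun s => (g s).isRight = true) = A).card)
      ≤ Fintype.card S ^ A.card * Fintype.card V ^ (Fintype.card S - A.card) := by
  classical
  have := Finset.card_le_card_of_injOn
    (f := fun g : S → V ⊕ S =>
      ((fun s : {x // x ∈ A} => (g s.1).getRight?.getD (Classical.arbitrary S)),
       (fun s : {x // x ∈ (univ \ A)} => (g s.1).getLeft?.getD (Classical.arbitrary V))))
    (s := univ.filter fun g : S → V ⊕ S =>
        (univ.filter fun s => (g s).isRight = true) = A)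
    (t := (univ : Finset (({x // x ∈ A} → S) × ({x // x ∈ (univ \ A)} → V))))
    (fun g _ => mem_univ _) ?_
  · calc _ ≤ _ := this
    _ = _ := by
      rw [Finset.card_univ, Fintype.card_prod, Fintype.card_fun, Fintype.card_fun,
        Fintype.card_coe, Fintype.card_coe, Finset.card_sdiff_of_subset (subset_univ A),
        Finset.card_univ]
  · intro g hg g' hg' heq
    simp only [coe_filter, Set.mem_setOf_eq, mem_univ, true_and] at hg hg'
    simp only [Prod.mk.injEq] at heq
    funext s
    by_cases hs : s ∈ A
    · have h1 : (g s).isRight = true := by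
        have hmem := hs; rw [← hg] at hmem; exact (Finset.mem_filter.mp hmem).2
      have h2 : (g' s).isRight = true := by
        have hmem := hs; rw [← hg'] at hmem; exact (Finset.mem_filter.mp hmem).2
      obtain ⟨y, hy⟩ := Sum.isRight_iff.mp h1
      obtain ⟨y', hy'⟩ := Sum.isRight_iff.mp h2
      have := congrFun heq.1 ⟨s, hs⟩
      simp only [hy, hy'] at this ⊢
      simpa using this
    · have h1 : ¬ (g s).isRight = true := by
        intro hr
        exact hs (by rw [← hg]; exact Finset.mem_filter.mpr ⟨mem_univ _, hr⟩)
      have h2 : ¬ (g' s).isRight = true := by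
        intro hr
        exact hs (by rw [← hg']; exact Finset.mem_filter.mpr ⟨mem_univ _, hr⟩)
      obtain ⟨y, hy⟩ := Sum.isLeft_iff.mp (Sum.not_isRight.mp h1)
      obtain ⟨y', hy'⟩ := Sum.isLeft_iff.mp (Sum.not_isRight.mp h2)
      have := congrFun heq.2 ⟨s, by simp [hs]⟩
      simp only [hy, hy'] at this ⊢
      simpa using this

lemma card_le_sum_of_small_image {T : Type*} (F : Finset T) (ψ : T → (S → V)) (r : ℕ)
    (hinj : Set.InjOn ψ F)
    (himg : ∀ t ∈ F, (univ.image (ψ t)).card + r ≤ Fintype.card S) :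
    F.card ≤ ∑ A ∈ univ.powerset.filter (fun A : Finset S => r ≤ A.card),
        Fintype.card S ^ A.card * Fintype.card V ^ (Fintype.card S - A.card) := by
  classical
  have step1 : F.card ≤ ((univ.filter fun g : S → V ⊕ S =>
        r ≤ (univ.filter fun s => (g s).isRight = true).card).card) := by
    apply Finset.card_le_card_of_injOn (fun t => enc (ψ t))
    · intro t ht
      simp only [mem_filter, mem_univ, true_and]
      have h1 := card_image_add_card_right (ψ t)
      have h2 := himg t ht
      have h3 : r ≤ (univ.filter fun s => (enc (ψ t) s).isRight = true).card := by omega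
      exact Finset.mem_coe.mpr (Finset.mem_filter.mpr ⟨mem_univ _, h3⟩)
    · intro a ha b hb h
      exact hinj ha hb (enc_injective h)
  refine step1.trans ?_
  rw [Finset.card_eq_sum_card_fiberwise
    (f := fun g : S → V ⊕ S => univ.filter fun s => (g s).isRight = true)
    (t := univ.powerset.filter (fun A : Finset S => r ≤ A.card))
    (fun g hg => by
      simp only [mem_filter, mem_univ, true_and, mem_powerset] at hg ⊢
      exact Finset.mem_filter.mpr ⟨Finset.mem_powerset.mpr (subset_univ _), by simpa using hg⟩)]
  apply Finset.sum_le_sum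
  intro A _
  refine le_trans (Finset.card_le_card ?_) (card_fiber_le A)
  intro g hg
  simp only [mem_filter, mem_univ, true_and] at hg ⊢
  exact hg.2

end Count

section Graph
variable {M N : ℕ}

def deg (f : Fin M → Fin N × Fin N) (i : Fin N) : ℕ :=
  (univ.filter fun l => (f l).1 = i).card + (univ.filter fun l => (f l).2 = i).card

def GoodT (f : Fin M → Fin N × Fin N) : Prop :=
  ∀ l, (f l).1 = (f l).2 ∨ 2 ≤ deg f (f l).1 ∨ 2 ≤ deg f (f l).2

instance : DecidablePred (GoodT (M := M) (N := N)) := fun _ =>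
  Fintype.decidableForallFintype

def Rset (f : Fin M → Fin N × Fin N) : Finset (Fin N) :=
  (univ.image fun l => (f l).1) ∪ (univ.image fun l => (f l).2)

lemma sum_deg (f : Fin M → Fin N × Fin N) : ∑ i, deg f i = 2 * M := by
  unfold deg
  rw [Finset.sum_add_distrib]
  rw [← Finset.card_eq_sum_card_fiberwise (f := fun l => (f l).1)
      (t := univ) (fun x _ => mem_univ _),
    ← Finset.card_eq_sum_card_fiberwise (f := fun l => (f l).2)
      (t := univ) (fun x _ => mem_univ _)]
  simp [Finset.card_univ, two_mul]

lemma one_le_deg_of_mem {f : Fin M → Fin N × Fin N} {i : Fin N} (h : i ∈ Rset f) :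
    1 ≤ deg f i := by
  simp only [Rset, mem_union, mem_image, mem_univ, true_and] at h
  rcases h with ⟨l, hl⟩ | ⟨l, hl⟩
  · have : l ∈ univ.filter fun l => (f l).1 = i := by simp [hl]
    have := Finset.card_pos.mpr ⟨l, this⟩
    unfold deg; omega
  · have : l ∈ univ.filter fun l => (f l).2 = i := by simp [hl]
    have := Finset.card_pos.mpr ⟨l, this⟩
    unfold deg; omega

lemma deg_eq_zero_of_not_mem {f : Fin M → Fin N × Fin N} {i : Fin N} (h : i ∉ Rset f) :
    deg f i = 0 := by
  simp only [Rset, mem_union, mem_image, mem_univ, true_and, not_or, not_exists] at h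
  unfold deg
  rw [Finset.filter_false_of_mem (fun l _ => h.1 l), Finset.filter_false_of_mem (fun l _ => h.2 l)]
  simp

lemma card_R1_le {f : Fin M → Fin N × Fin N} (hM : 0 < M) (hf : GoodT f) :
    ((Rset f).filter fun i => deg f i = 1).card ≤ M := by
  classical
  have : ((Rset f).filter fun i => deg f i = 1).card ≤ (univ : Finset (Fin M)).card := by
    apply Finset.card_le_card_of_injOn
      (f := fun i => if h : ∃ l, (f l).1 = i ∨ (f l).2 = i then h.choose else ⟨0, hM⟩)
    · exact fun _ _ => mem_univ _
    · intro i hi j hj hij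
      simp only [coe_filter, Set.mem_setOf_eq] at hi hj
      have hexi : ∃ l, (f l).1 = i ∨ (f l).2 = i := by
        have := hi.1
        simp only [Rset, mem_union, mem_image, mem_univ, true_and] at this
        rcases this with ⟨l, hl⟩ | ⟨l, hl⟩
        exacts [⟨l, Or.inl hl⟩, ⟨l, Or.inr hl⟩]
      have hexj : ∃ l, (f l).1 = j ∨ (f l).2 = j := by
        have := hj.1
        simp only [Rset, mem_union, mem_image, mem_univ, true_and] at this
        rcases this with ⟨l, hl⟩ | ⟨l, hl⟩
        exacts [⟨l, Or.inl hl⟩, ⟨l, Or.inr hl⟩]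
      dsimp only at hij
      rw [dif_pos hexi, dif_pos hexj] at hij
      set l := hexi.choose with hl
      have hli := hexi.choose_spec
      have hlj := hexj.choose_spec
      rw [← hij] at hlj
      -- l carries both i and j
      rcases hli with h1 | h1 <;> rcases hlj with h2 | h2
      · rw [← h1, ← h2]
      · -- (f l).1 = i, (f l).2 = j
        by_contra hne
        have hfne : (f l).1 ≠ (f l).2 := by rw [h1, h2]; exact fun hc => hne hc
        rcases hf l with hc | hc | hc
        · exact hfne hc
        · rw [h1, hi.2] at hc; exact absurd hc (by norm_num)
        · rw [h2, hj.2] at hc; exact absurd hc (by norm_num)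
      · by_contra hne
        have hfne : (f l).1 ≠ (f l).2 := by rw [h1, h2]; exact fun hc => hne hc.symm
        rcases hf l with hc | hc | hc
        · exact hfne hc
        · rw [h2, hj.2] at hc; exact absurd hc (by norm_num)
        · rw [h1, hi.2] at hc; exact absurd hc (by norm_num)
      · rw [← h1, ← h2]
  rwa [Finset.card_univ, Fintype.card_fin] at this

lemma card_R_le {f : Fin M → Fin N × Fin N} (hM : 0 < M) (hf : GoodT f) :
    2 * (Rset f).card ≤ 3 * M := by
  classical
  have hsum : ∑ i ∈ Rset f, deg f i = 2 * M := by
    rw [← sum_deg f]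
    exact Finset.sum_subset (subset_univ _)
      (fun i _ hi => deg_eq_zero_of_not_mem hi)
  have hsplit : ∑ i ∈ Rset f, deg f i
      = ∑ i ∈ (Rset f).filter (fun i => deg f i = 1), deg f i
        + ∑ i ∈ (Rset f).filter (fun i => ¬ deg f i = 1), deg f i :=
    (Finset.sum_filter_add_sum_filter_not _ _ _).symm
  have h1 : ∑ i ∈ (Rset f).filter (fun i => deg f i = 1), deg f i
      = ((Rset f).filter (fun i => deg f i = 1)).card := by
    rw [Finset.sum_congr rfl (fun i hi => (Finset.mem_filter.mp hi).2)]
    simp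
  have h2 : ((Rset f).filter (fun i => ¬ deg f i = 1)).card * 2
      ≤ ∑ i ∈ (Rset f).filter (fun i => ¬ deg f i = 1), deg f i := by
    have := Finset.card_nsmul_le_sum ((Rset f).filter (fun i => ¬ deg f i = 1))
      (deg f) 2 (fun i hi => by
        simp only [mem_filter] at hi
        have := one_le_deg_of_mem hi.1
        omega)
    simpa [smul_eq_mul, mul_comm] using this
  have hcards : ((Rset f).filter (fun i => deg f i = 1)).card
      + ((Rset f).filter (fun i => ¬ deg f i = 1)).card = (Rset f).card :=
    Finset.card_filter_add_card_filter_not _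
  have hR1 := card_R1_le hM hf
  omega

end Graph


def slotVal {M N : ℕ} (f : Fin M → Fin N × Fin N) : Lex (Fin M × Bool) → Fin N :=
  fun s => if (ofLex s).2 then (f (ofLex s).1).2 else (f (ofLex s).1).1

lemma slotVal_injective {M N : ℕ} :
    Function.Injective (slotVal (M := M) (N := N)) := by
  intro f g h
  funext l
  have h1 := congrFun h (toLex (l, false))
  have h2 := congrFun h (toLex (l, true))
  simp only [slotVal, ofLex_toLex] at h1 h2
  exact Prod.ext (by simpa using h1) (by simpa using h2)

lemma image_slotVal {M N : ℕ} (f : Fin M → Fin N × Fin N) :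
    univ.image (slotVal f) = Rset f := by
  ext i
  simp only [mem_image, mem_univ, true_and, Rset, mem_union, mem_image]
  constructor
  · rintro ⟨s, hs⟩
    rcases hb : (ofLex s).2 with _ | _
    · left; exact ⟨(ofLex s).1, by simp only [slotVal, hb] at hs; simpa using hs⟩
    · right; exact ⟨(ofLex s).1, by simp only [slotVal, hb] at hs; simpa using hs⟩
  · rintro (⟨l, hl⟩ | ⟨l, hl⟩)
    · exact ⟨toLex (l, false), by simp [slotVal, hl]⟩
    · exact ⟨toLex (l, true), by simp [slotVal, hl]⟩

lemma sum_powerset_pow_card {α : Type*} [Fintype α] [DecidableEq α] (x : ℝ) :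
    ∑ A ∈ (univ : Finset α).powerset, x ^ A.card = (1 + x) ^ (Fintype.card α) := by
  rw [Finset.sum_powerset]
  have : ∀ j ∈ Finset.range ((univ : Finset α).card + 1),
      ∑ A ∈ Finset.powersetCard j (univ : Finset α), x ^ A.card
        = ((univ : Finset α).card).choose j * x ^ j := by
    intro j hj
    rw [Finset.sum_congr rfl (fun A hA => by
      rw [(Finset.mem_powersetCard.mp hA).2]), Finset.sum_const,
      Finset.card_powersetCard, nsmul_eq_mul]
  rw [Finset.sum_congr rfl this, add_comm (1:ℝ) x, add_pow]
  simp [Finset.card_univ, mul_comm, mul_assoc]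

set_option maxHeartbeats 1000000 in
lemma card_goodT_le (k N : ℕ) (hk : 1 ≤ k) (hkN : k ≤ N) :
    ((univ.filter fun f : Fin (2*k) → Fin N × Fin N => GoodT f).card : ℝ)
      ≤ (k : ℝ) ^ k * (N : ℝ) ^ (3*k) * 625 ^ k := by
  classical
  have hN : 1 ≤ N := le_trans hk hkN
  haveI : Nonempty (Fin N) := ⟨⟨0, hN⟩⟩
  haveI : Nonempty (Lex (Fin (2*k) × Bool)) := ⟨toLex (⟨0, by omega⟩, false)⟩
  have hcS : Fintype.card (Lex (Fin (2*k) × Bool)) = 4 * k := by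
    simp [Fintype.card_prod]; omega
  refine le_trans (Nat.cast_le.mpr
    (card_le_sum_of_small_image (V := Fin N)
      (univ.filter fun f : Fin (2*k) → Fin N × Fin N => GoodT f) slotVal k
      (fun a _ b _ h => slotVal_injective h)
      (fun f hf => by
        simp only [mem_filter, mem_univ, true_and] at hf
        rw [image_slotVal, hcS]
        have := card_R_le (f := f) (by omega) hf
        omega))) ?_
  push_cast
  have hterm : ∀ A ∈ (univ : Finset (Lex (Fin (2*k) × Bool))).powerset.filter
      (fun A => k ≤ A.card),
      ((Fintype.card (Lex (Fin (2*k) × Bool)) : ℝ) ^ A.card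
          * (Fintype.card (Fin N) : ℝ) ^ (Fintype.card (Lex (Fin (2*k) × Bool)) - A.card))
        ≤ ((4*k : ℝ)) ^ k * (N:ℝ) ^ (3*k) * (4:ℝ) ^ A.card / 4 ^ k := by
    intro A hA
    simp only [mem_filter, mem_powerset] at hA
    have hAle : A.card ≤ 4 * k := by
      have := Finset.card_le_card hA.1
      rwa [Finset.card_univ, hcS] at this
    have hAk := hA.2
    rw [hcS, Fintype.card_fin]
    set a := A.card
    have e1 : ((4*k : ℕ) : ℝ) ^ a = (4*(k:ℝ)) ^ k * (4*(k:ℝ)) ^ (a - k) := by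
      push_cast
      rw [← pow_add]
      congr 1
      omega
    have e2 : (4*(k:ℝ)) ^ (a - k) ≤ (4*(N:ℝ)) ^ (a - k) := by
      apply pow_le_pow_left₀ (by positivity)
      have : (k:ℝ) ≤ (N:ℝ) := by exact_mod_cast hkN
      linarith
    have e3 : (4*(N:ℝ)) ^ (a - k) = 4 ^ (a - k) * (N:ℝ) ^ (a - k) := mul_pow _ _ _
    have e4 : (N:ℝ) ^ (a - k) * (N:ℝ) ^ (4*k - a) = (N:ℝ) ^ (3*k) := by
      rw [← pow_add]; congr 1; omega
    have e5 : (4:ℝ) ^ (a - k) = 4 ^ a / 4 ^ k := by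
      rw [eq_div_iff (by positivity), ← pow_add]; congr 1; omega
    calc ((4*k : ℕ) : ℝ) ^ a * (N:ℝ) ^ (4*k - a)
        = (4*(k:ℝ)) ^ k * ((4*(k:ℝ)) ^ (a - k) * (N:ℝ) ^ (4*k - a)) := by
          rw [e1]; ring
      _ ≤ (4*(k:ℝ)) ^ k * ((4*(N:ℝ)) ^ (a - k) * (N:ℝ) ^ (4*k - a)) := by
          apply mul_le_mul_of_nonneg_left _ (by positivity)
          apply mul_le_mul_of_nonneg_right e2 (by positivity)
      _ = (4*(k:ℝ)) ^ k * (4 ^ (a-k) * ((N:ℝ) ^ (a - k) * (N:ℝ) ^ (4*k - a))) := by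
          rw [e3]; ring
      _ = (4*(k:ℝ)) ^ k * (N:ℝ) ^ (3*k) * ((4:ℝ) ^ a / 4 ^ k) := by
          rw [e4, e5]; ring
      _ = (4*(k : ℝ)) ^ k * (N:ℝ) ^ (3*k) * (4:ℝ) ^ a / 4 ^ k := by ring
  calc ∑ A ∈ (univ : Finset (Lex (Fin (2*k) × Bool))).powerset.filter
            (fun A => k ≤ A.card),
          ((Fintype.card (Lex (Fin (2*k) × Bool)) : ℝ) ^ A.card
            * (Fintype.card (Fin N) : ℝ) ^ (Fintype.card (Lex (Fin (2*k) × Bool)) - A.card))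
      ≤ ∑ A ∈ (univ : Finset (Lex (Fin (2*k) × Bool))).powerset.filter
            (fun A => k ≤ A.card),
          ((4*k : ℝ)) ^ k * (N:ℝ) ^ (3*k) * (4:ℝ) ^ A.card / 4 ^ k :=
        Finset.sum_le_sum hterm
    _ ≤ ∑ A ∈ (univ : Finset (Lex (Fin (2*k) × Bool))).powerset,
          ((4*k : ℝ)) ^ k * (N:ℝ) ^ (3*k) * (4:ℝ) ^ A.card / 4 ^ k := by
        apply Finset.sum_le_sum_of_subset_of_nonneg (Finset.filter_subset _ _)
        intro A _ _
        positivity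
    _ = ((4*k : ℝ)) ^ k * (N:ℝ) ^ (3*k) / 4 ^ k *
          ∑ A ∈ (univ : Finset (Lex (Fin (2*k) × Bool))).powerset, (4:ℝ) ^ A.card := by
        rw [Finset.mul_sum]; apply Finset.sum_congr rfl; intro A _; ring
    _ = ((4*k : ℝ)) ^ k * (N:ℝ) ^ (3*k) / 4 ^ k * (1+4) ^ (4*k) := by
        rw [sum_powerset_pow_card, hcS]
    _ ≤ (k : ℝ) ^ k * (N : ℝ) ^ (3*k) * 625 ^ k := by
        have h5 : ((1:ℝ)+4) ^ (4*k) = 625 ^ k := by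
          norm_num [pow_mul]
        rw [h5]
        apply le_of_eq
        rw [mul_pow]
        have h4 : (4:ℝ)^k ≠ 0 := by positivity
        field_simp


section Meas
variable {d N : ℕ} (ρ : Measure (Fin d → ℝ)) [IsProbabilityMeasure ρ]

def builder {d N : ℕ} (a b : Fin N) :
    (((Fin d → ℝ) × (Fin d → ℝ)) × (Fin N → Fin d → ℝ)) → (Fin N → Fin d → ℝ) :=
  fun q i => if i = a then q.1.1 else if i = b then q.1.2 else q.2 i

lemma measurable_builder (a b : Fin N) : Measurable (builder (d := d) a b) := by
  apply measurable_pi_lambda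
  intro i
  by_cases h1 : i = a
  · simpa [builder, h1] using (measurable_fst.fst : Measurable
      fun q : ((Fin d → ℝ) × (Fin d → ℝ)) × (Fin N → Fin d → ℝ) => q.1.1)
  · by_cases h2 : i = b
    · subst h2
      simpa [builder, h1] using (measurable_fst.snd : Measurable
        fun q : ((Fin d → ℝ) × (Fin d → ℝ)) × (Fin N → Fin d → ℝ) => q.1.2)
    · simpa [builder, h1, h2] using
        (measurable_snd.eval : Measurable
          fun q : ((Fin d → ℝ) × (Fin d → ℝ)) × (Fin N → Fin d → ℝ) => q.2 i)

lemma builder_map (a b : Fin N) (hab : a ≠ b) :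
    Measure.map (builder (d := d) a b)
        ((ρ.prod ρ).prod (Measure.pi fun _ : Fin N => ρ))
      = Measure.pi fun _ : Fin N => ρ := by
  classical
  refine (Measure.pi_eq fun s hs => ?_).symm
  rw [Measure.map_apply (measurable_builder a b) (MeasurableSet.univ_pi hs)]
  have hpre : builder (d := d) a b ⁻¹' (Set.univ.pi s)
      = (s a ×ˢ s b) ×ˢ (Set.univ.pi fun i => if i = a ∨ i = b then Set.univ else s i) := by
    ext ⟨⟨u1, u2⟩, z⟩
    simp only [Set.mem_preimage, Set.mem_pi, Set.mem_univ, true_implies, Set.mem_prod]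
    constructor
    · intro h
      refine ⟨⟨?_, ?_⟩, ?_⟩
      · have := h a; simpa [builder] using this
      · have := h b
        simpa [builder, Ne.symm hab] using this
      · intro i
        by_cases h1 : i = a ∨ i = b
        · rw [if_pos h1]; trivial
        · rw [if_neg h1]
          push_neg at h1
          have := h i
          simp only [builder] at this
          rwa [if_neg h1.1, if_neg h1.2] at this
    · rintro ⟨⟨h1, h2⟩, h3⟩ i
      by_cases ha : i = a
      · subst ha; simpa [builder] using h1
      · by_cases hb : i = b
        · subst hb
          simpa [builder, ha] using h2
        · have := h3 i
          rw [if_neg (by tauto)] at this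
          simp only [builder]
          rwa [if_neg ha, if_neg hb]
  rw [hpre, Measure.prod_prod, Measure.prod_prod, Measure.pi_pi]
  have key : ∀ g : Fin N → ENNReal, ∏ i, g i
      = g a * (g b * ∏ i ∈ (univ.erase a).erase b, g i) := by
    intro g
    rw [← Finset.mul_prod_erase univ g (mem_univ a),
      ← Finset.mul_prod_erase (univ.erase a) g
        (Finset.mem_erase.mpr ⟨Ne.symm hab, mem_univ b⟩)]
  rw [key (fun i => ρ (s i)), key (fun i => ρ (if i = a ∨ i = b then Set.univ else s i))]
  have ht1 : ρ (if a = a ∨ a = b then Set.univ else s a) = 1 := by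
    rw [if_pos (Or.inl rfl)]; exact measure_univ
  have ht2 : ρ (if b = a ∨ b = b then Set.univ else s b) = 1 := by
    rw [if_pos (Or.inr rfl)]; exact measure_univ
  have ht3 : ∏ i ∈ (univ.erase a).erase b, ρ (if i = a ∨ i = b then Set.univ else s i)
      = ∏ i ∈ (univ.erase a).erase b, ρ (s i) := by
    apply Finset.prod_congr rfl
    intro i hi
    simp only [Finset.mem_erase] at hi
    rw [if_neg (by tauto)]
  rw [ht1, ht2, ht3]
  ring

lemma key_zero (φ : (Fin d → ℝ) → (Fin d → ℝ) → ℝ) (hφm : Measurable (Function.uncurry φ))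
    (Cφ : ℝ) (hφb : ∀ x y, |φ x y| ≤ Cφ)
    (hcanc : ∫ x, ∫ y, φ x y ∂ρ ∂ρ = 0)
    {a b : Fin N} (hab : a ≠ b) (h : (Fin N → Fin d → ℝ) → ℝ) (hm : Measurable h)
    (hdep : ∀ x y, (∀ i, i ≠ a → i ≠ b → x i = y i) → h x = h y) :
    ∫ x, φ (x a) (x b) * h x ∂(Measure.pi fun _ : Fin N => ρ) = 0 := by
  have hφm2 : Measurable fun z : (Fin d → ℝ) × (Fin d → ℝ) => φ z.1 z.2 := hφm
  have hint : Integrable (fun z : (Fin d → ℝ) × (Fin d → ℝ) => φ z.1 z.2) (ρ.prod ρ) := by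
    refine Integrable.mono' (integrable_const Cφ) hφm2.aestronglyMeasurable ?_
    exact Filter.Eventually.of_forall fun z => by
      rw [Real.norm_eq_abs]; exact hφb _ _
  have hzero : ∫ z : (Fin d → ℝ) × (Fin d → ℝ), φ z.1 z.2 ∂(ρ.prod ρ) = 0 := by
    rw [integral_prod _ hint]; exact hcanc
  have hFmeas : Measurable fun x : Fin N → Fin d → ℝ => φ (x a) (x b) * h x := by
    exact (hφm.comp ((measurable_pi_apply a).prodMk (measurable_pi_apply b))).mul hm
  rw [← builder_map ρ a b hab,
    integral_map (measurable_builder a b).aemeasurable hFmeas.aestronglyMeasurable]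
  have hptw : ∀ q : ((Fin d → ℝ) × (Fin d → ℝ)) × (Fin N → Fin d → ℝ),
      φ (builder a b q a) (builder a b q b) * h (builder a b q)
        = φ q.1.1 q.1.2 * h q.2 := by
    intro q
    have e1 : builder (d := d) a b q a = q.1.1 := by simp [builder]
    have e2 : builder (d := d) a b q b = q.1.2 := by
      simp [builder, Ne.symm hab]
    have e3 : h (builder a b q) = h q.2 :=
      hdep _ _ fun i hia hib => by simp [builder, hia, hib]
    rw [e1, e2, e3]
  calc ∫ q, φ (builder a b q a) (builder a b q b) * h (builder a b q)
          ∂((ρ.prod ρ).prod (Measure.pi fun _ : Fin N => ρ))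
      = ∫ q : ((Fin d → ℝ) × (Fin d → ℝ)) × (Fin N → Fin d → ℝ),
          (fun u : (Fin d → ℝ) × (Fin d → ℝ) => φ u.1 u.2) q.1 * h q.2
          ∂((ρ.prod ρ).prod (Measure.pi fun _ : Fin N => ρ)) :=
        integral_congr_ae (Filter.Eventually.of_forall hptw)
    _ = (∫ u : (Fin d → ℝ) × (Fin d → ℝ), φ u.1 u.2 ∂(ρ.prod ρ))
          * ∫ x, h x ∂(Measure.pi fun _ : Fin N => ρ) :=
        integral_prod_mul (f := fun u : (Fin d → ℝ) × (Fin d → ℝ) => φ u.1 u.2) (g := h)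
    _ = 0 := by rw [hzero, zero_mul]

end Meas

section Mom
variable {M N d : ℕ}

variable (ρ : Measure (Fin d → ℝ)) [IsProbabilityMeasure ρ]
  (φ : (Fin d → ℝ) → (Fin d → ℝ) → ℝ) (hφm : Measurable (Function.uncurry φ))
  (Cφ : ℝ) (hCφ : 0 ≤ Cφ) (hφb : ∀ x y, |φ x y| ≤ Cφ)
include hφm in
lemma meas_tup (f : Fin M → Fin N × Fin N) :
    Measurable fun x : Fin N → Fin d → ℝ => ∏ l, φ (x (f l).1) (x (f l).2) := by
  apply Finset.measurable_prod
  intro l _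
  have : Measurable fun x : Fin N → Fin d → ℝ =>
      Function.uncurry φ (x (f l).1, x (f l).2) :=
    hφm.comp ((measurable_pi_apply (f l).1).prodMk (measurable_pi_apply (f l).2))
  exact this

include hφb in
lemma abs_tup_le (f : Fin M → Fin N × Fin N) (x : Fin N → Fin d → ℝ) :
    |∏ l, φ (x (f l).1) (x (f l).2)| ≤ Cφ ^ M := by
  rw [Finset.abs_prod]
  calc ∏ l, |φ (x (f l).1) (x (f l).2)| ≤ ∏ _l : Fin M, Cφ :=
        Finset.prod_le_prod (fun _ _ => abs_nonneg _) (fun l _ => hφb _ _)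
    _ = Cφ ^ M := by rw [Finset.prod_const, Finset.card_univ, Fintype.card_fin]

include hφm hφb in
lemma int_tup (f : Fin M → Fin N × Fin N) :
    Integrable (fun x : Fin N → Fin d → ℝ => ∏ l, φ (x (f l).1) (x (f l).2))
      (Measure.pi fun _ : Fin N => ρ) := by
  refine Integrable.mono' (integrable_const (Cφ ^ M))
    (meas_tup φ hφm f).aestronglyMeasurable ?_
  exact Filter.Eventually.of_forall fun x => by
    rw [Real.norm_eq_abs]; exact abs_tup_le φ Cφ hφb f x

include hφm hφb in
lemma tup_zero (hcanc : ∫ x, ∫ y, φ x y ∂ρ ∂ρ = 0)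
    (f : Fin M → Fin N × Fin N) (hbad : ¬ GoodT f) :
    ∫ x, ∏ l, φ (x (f l).1) (x (f l).2) ∂(Measure.pi fun _ : Fin N => ρ) = 0 := by
  classical
  unfold GoodT at hbad
  push_neg at hbad
  obtain ⟨l₀, hne, hd1, hd2⟩ := hbad
  set a := (f l₀).1 with ha
  set b := (f l₀).2 with hb
  have hmem1 : l₀ ∈ univ.filter fun l => (f l).1 = a := by simp [ha]
  have hmem2 : l₀ ∈ univ.filter fun l => (f l).2 = b := by simp [hb]
  have hc1 : (univ.filter fun l => (f l).1 = a).card = 1 ∧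
      (univ.filter fun l => (f l).2 = a).card = 0 := by
    have h1 := Finset.card_pos.mpr ⟨l₀, hmem1⟩
    unfold deg at hd1
    omega
  have hc2 : (univ.filter fun l => (f l).2 = b).card = 1 ∧
      (univ.filter fun l => (f l).1 = b).card = 0 := by
    have h1 := Finset.card_pos.mpr ⟨l₀, hmem2⟩
    unfold deg at hd2
    omega
  have A1 : ∀ l, (f l).1 = a → l = l₀ := fun l hl =>
    Finset.card_le_one.mp (le_of_eq hc1.1) l (by simp [hl]) l₀ hmem1
  have A2 : ∀ l, (f l).2 ≠ a := fun l hl => by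
    have : l ∈ univ.filter fun l => (f l).2 = a := by simp [hl]
    rw [Finset.card_eq_zero.mp hc1.2] at this
    exact absurd this (Finset.notMem_empty l)
  have B1 : ∀ l, (f l).2 = b → l = l₀ := fun l hl =>
    Finset.card_le_one.mp (le_of_eq hc2.1) l (by simp [hl]) l₀ hmem2
  have B2 : ∀ l, (f l).1 ≠ b := fun l hl => by
    have : l ∈ univ.filter fun l => (f l).1 = b := by simp [hl]
    rw [Finset.card_eq_zero.mp hc2.2] at this
    exact absurd this (Finset.notMem_empty l)
  have hsplit : ∀ x : Fin N → Fin d → ℝ,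
      ∏ l, φ (x (f l).1) (x (f l).2)
        = φ (x a) (x b) * ∏ l ∈ univ.erase l₀, φ (x (f l).1) (x (f l).2) :=
    fun x => (Finset.mul_prod_erase univ _ (mem_univ l₀)).symm
  rw [integral_congr_ae (Filter.Eventually.of_forall hsplit)]
  refine key_zero (N := N) ρ φ hφm Cφ hφb hcanc hne
    (fun x => ∏ l ∈ univ.erase l₀, φ (x (f l).1) (x (f l).2)) ?_ ?_
  · apply Finset.measurable_prod
    intro l _
    have : Measurable fun x : Fin N → Fin d → ℝ =>
        Function.uncurry φ (x (f l).1, x (f l).2) :=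
      hφm.comp ((measurable_pi_apply (f l).1).prodMk (measurable_pi_apply (f l).2))
    exact this
  · intro x y hxy
    apply Finset.prod_congr rfl
    intro l hl
    have hll₀ : l ≠ l₀ := (Finset.mem_erase.mp hl).1
    have h1 : (f l).1 ≠ a := fun hc => hll₀ (A1 l hc)
    have h2 : (f l).2 ≠ b := fun hc => hll₀ (B1 l hc)
    rw [hxy _ h1 (B2 l), hxy _ (A2 l) h2]

include hφm hCφ hφb in
lemma moment_le (hcanc : ∫ x, ∫ y, φ x y ∂ρ ∂ρ = 0) (k : ℕ) (hk : 1 ≤ k) (hkN : k ≤ N) :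
    ∫ x, (∑ i, ∑ j, φ (x i) (x j)) ^ (2*k) ∂(Measure.pi fun _ : Fin N => ρ)
      ≤ (k : ℝ) ^ k * (N : ℝ) ^ (3*k) * 625 ^ k * Cφ ^ (2*k) := by
  classical
  have hrw : ∀ x : Fin N → Fin d → ℝ,
      (∑ i, ∑ j, φ (x i) (x j)) ^ (2*k)
        = ∑ g : Fin (2*k) → Fin N × Fin N, ∏ l, φ (x (g l).1) (x (g l).2) := by
    intro x
    rw [← Fintype.sum_prod_type (f := fun p : Fin N × Fin N => φ (x p.1) (x p.2))]
    exact Fintype.sum_pow (fun p : Fin N × Fin N => φ (x p.1) (x p.2)) (2*k)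
  rw [integral_congr_ae (Filter.Eventually.of_forall hrw)]
  rw [integral_finset_sum _ (fun g _ => int_tup ρ φ hφm Cφ hφb g)]
  rw [← Finset.sum_filter_add_sum_filter_not univ (fun g => GoodT g)
    (fun g => ∫ x, ∏ l, φ (x (g l).1) (x (g l).2) ∂(Measure.pi fun _ : Fin N => ρ))]
  rw [Finset.sum_eq_zero (fun g hg =>
    tup_zero ρ φ hφm Cφ hφb hcanc g (Finset.mem_filter.mp hg).2), add_zero]
  have habs : ∀ g : Fin (2*k) → Fin N × Fin N,
      ∫ x, ∏ l, φ (x (g l).1) (x (g l).2) ∂(Measure.pi fun _ : Fin N => ρ) ≤ Cφ ^ (2*k) := by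
    intro g
    have := norm_integral_le_of_norm_le_const (μ := Measure.pi fun _ : Fin N => ρ)
      (C := Cφ ^ (2*k)) (f := fun x => ∏ l, φ (x (g l).1) (x (g l).2))
      (Filter.Eventually.of_forall fun x => by
        rw [Real.norm_eq_abs]; exact abs_tup_le φ Cφ hφb g x)
    rw [probReal_univ, mul_one, Real.norm_eq_abs] at this
    exact le_trans (le_abs_self _) this
  calc ∑ g ∈ univ.filter (fun g : Fin (2*k) → Fin N × Fin N => GoodT g),
        ∫ x, ∏ l, φ (x (g l).1) (x (g l).2) ∂(Measure.pi fun _ : Fin N => ρ)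
      ≤ ∑ _g ∈ univ.filter (fun g : Fin (2*k) → Fin N × Fin N => GoodT g), Cφ ^ (2*k) :=
        Finset.sum_le_sum (fun g _ => habs g)
    _ = ((univ.filter (fun g : Fin (2*k) → Fin N × Fin N => GoodT g)).card : ℝ) * Cφ ^ (2*k) := by
        rw [Finset.sum_const, nsmul_eq_mul]
    _ ≤ (k : ℝ) ^ k * (N : ℝ) ^ (3*k) * 625 ^ k * Cφ ^ (2*k) := by
        apply mul_le_mul_of_nonneg_right (card_goodT_le k N hk hkN) (by positivity)

end Mom

lemma pow_div_fact_le_exp (x : ℝ) (hx : 0 ≤ x) (k : ℕ) :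
    x ^ k / k.factorial ≤ Real.exp x := by
  have : Real.exp x = ∑' n : ℕ, x ^ n / n.factorial := by
    rw [Real.exp_eq_exp_ℝ, NormedSpace.exp_eq_tsum_div]
  rw [this]
  exact (Real.summable_pow_div_factorial x).le_tsum k fun j _ => by positivity

lemma pow_pow_div_fact_le (k : ℕ) : (k : ℝ) ^ k / k.factorial ≤ Real.exp 1 ^ k := by
  rw [Real.exp_one_pow]
  exact pow_div_fact_le_exp (k : ℝ) (Nat.cast_nonneg k) k

/-- Modified exponential law of large numbers: for a probability measure `ρ̄` on `ℝ^d`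
and bounded `φ` with `∫∫ φ dρ̄ dρ̄ = 0` and `α₀ := e⁹‖φ‖²_∞ < 1`, `β₀ := 4e‖φ‖²_∞ < 1`,
one has for all `N ≥ 2`:
`∫ exp(N |⟨φ, μ_N ⊗ μ_N⟩|²) dρ̄^{⊗N} ≤ 1 + α₀/(1−α₀) + β₀/(1−β₀)`. -/
theorem stmt2 (d : ℕ) (ρ : Measure (Fin d → ℝ)) [IsProbabilityMeasure ρ]
    (φ : (Fin d → ℝ) → (Fin d → ℝ) → ℝ) (hφm : Measurable (Function.uncurry φ))
    (Cφ : ℝ) (hCφ : 0 ≤ Cφ) (hφb : ∀ x y, |φ x y| ≤ Cφ)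
    (hcanc : ∫ x, ∫ y, φ x y ∂ρ ∂ρ = 0)
    (hα : Real.exp 9 * Cφ ^ 2 < 1) (hβ : 4 * Real.exp 1 * Cφ ^ 2 < 1) :
    ∀ N : ℕ, 2 ≤ N →
      ∫⁻ x : Fin N → (Fin d → ℝ),
          ENNReal.ofReal
            (Real.exp ((N : ℝ) *
              |(1 / (N : ℝ) ^ 2) * ∑ i : Fin N, ∑ j : Fin N, φ (x i) (x j)| ^ 2))
        ∂(Measure.pi fun _ : Fin N => ρ)
      ≤ ENNReal.ofReal
          (1 + (Real.exp 9 * Cφ ^ 2) / (1 - Real.exp 9 * Cφ ^ 2)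
             + (4 * Real.exp 1 * Cφ ^ 2) / (1 - 4 * Real.exp 1 * Cφ ^ 2)) := by
  intro N hN
  set α : ℝ := Real.exp 9 * Cφ ^ 2 with hα'
  set β : ℝ := 4 * Real.exp 1 * Cφ ^ 2 with hβ'
  have hα0 : 0 ≤ α := by positivity
  have hβ0 : 0 ≤ β := by positivity
  have hNR : (0:ℝ) < (N:ℝ) := by
    have : 0 < N := by omega
    exact_mod_cast this
  set μN := (Measure.pi fun _ : Fin N => ρ) with hμN
  set S : (Fin N → Fin d → ℝ) → ℝ := fun x => ∑ i, ∑ j, φ (x i) (x j) with hS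
  set X : (Fin N → Fin d → ℝ) → ℝ := fun x => (1 / (N : ℝ) ^ 2) * S x with hX
  have hSm : Measurable S := by
    apply Finset.measurable_sum
    intro i _
    apply Finset.measurable_sum
    intro j _
    have : Measurable fun x : Fin N → Fin d → ℝ =>
        Function.uncurry φ (x i, x j) :=
      hφm.comp ((measurable_pi_apply i).prodMk (measurable_pi_apply j))
    exact this
  have hXm : Measurable X := measurable_const.mul hSm
  have hXb : ∀ x, |X x| ≤ Cφ := by
    intro x
    rw [hX, abs_mul, abs_of_nonneg (by positivity : (0:ℝ) ≤ 1 / (N:ℝ)^2)]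
    have h1 : |S x| ≤ (N:ℝ)^2 * Cφ := by
      calc |S x| ≤ ∑ i, |∑ j, φ (x i) (x j)| := Finset.abs_sum_le_sum_abs _ _
        _ ≤ ∑ _i : Fin N, ∑ _j : Fin N, Cφ := Finset.sum_le_sum fun i _ =>
            le_trans (Finset.abs_sum_le_sum_abs _ _)
              (Finset.sum_le_sum fun j _ => hφb _ _)
        _ = (N:ℝ)^2 * Cφ := by
            simp [Finset.sum_const, Finset.card_univ]
            ring
    calc (1 / (N:ℝ)^2) * |S x| ≤ (1 / (N:ℝ)^2) * ((N:ℝ)^2 * Cφ) := by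
          apply mul_le_mul_of_nonneg_left h1 (by positivity)
      _ = Cφ := by field_simp
  have hX2 : ∀ x, X x ^ 2 ≤ Cφ ^ 2 := fun x => by
    rw [← sq_abs]
    apply pow_le_pow_left₀ (abs_nonneg _) (hXb x)
  -- the series terms
  set g : ℕ → (Fin N → Fin d → ℝ) → ℝ :=
    fun k x => ((N : ℝ) * X x ^ 2) ^ k / k.factorial with hg
  have hg0 : ∀ k x, 0 ≤ g k x := fun k x => by
    have : (0:ℝ) ≤ (N : ℝ) * X x ^ 2 := by positivity
    positivity
  have hgm : ∀ k, Measurable (g k) := fun k =>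
    ((measurable_const.mul (hXm.pow_const 2)).pow_const k).div_const _
  have hgb : ∀ k x, g k x ≤ ((N:ℝ) * Cφ ^ 2) ^ k / k.factorial := by
    intro k x
    have hfp : (0:ℝ) < k.factorial := by exact_mod_cast k.factorial_pos
    apply (div_le_div_iff_of_pos_right hfp).mpr
    apply pow_le_pow_left₀ (by positivity)
    exact mul_le_mul_of_nonneg_left (hX2 x) hNR.le
  have hgInt : ∀ k, Integrable (g k) μN := fun k =>
    Integrable.mono' (integrable_const (((N:ℝ) * Cφ ^ 2) ^ k / k.factorial))
      (hgm k).aestronglyMeasurable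
      (Filter.Eventually.of_forall fun x => by
        rw [Real.norm_eq_abs, abs_of_nonneg (hg0 k x)]; exact hgb k x)
  have hα1 : α < 1 := hα
  have hβ1 : β < 1 := hβ
  -- key per-k bound
  have hbound : ∀ k : ℕ, ∫ x, g (k+1) x ∂μN ≤ α^(k+1) + β^(k+1) := by
    intro k
    have hkk : (0:ℝ) < ((k+1).factorial : ℝ) := by exact_mod_cast (k+1).factorial_pos
    have hee : ((k+1:ℕ):ℝ) ^ (k+1) / ((k+1).factorial : ℝ) ≤ Real.exp 1 ^ (k+1) :=
      pow_pow_div_fact_le (k+1)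
    by_cases hcase : k + 1 ≤ N
    · -- α branch
      have hmom := moment_le ρ φ hφm Cφ hCφ hφb hcanc (k+1) (by omega) hcase
      have hSmom : ∫ x, S x ^ (2*(k+1)) ∂μN
          ≤ ((k+1:ℕ) : ℝ) ^ (k+1) * (N : ℝ) ^ (3*(k+1)) * 625 ^ (k+1) * Cφ ^ (2*(k+1)) := by
        simp only [hS]
        exact_mod_cast hmom
      set c : ℝ := (N:ℝ)^(k+1) * ((1/(N:ℝ)^2)^(2*(k+1))) / ((k+1).factorial : ℝ) with hc
      have hc0 : 0 ≤ c := by positivity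
      have hgc : ∀ x, g (k+1) x = c * S x ^ (2*(k+1)) := by
        intro x
        simp only [hg, hX, hc]
        rw [mul_pow ((N:ℝ)), mul_pow (1/(N:ℝ)^2) (S x), mul_pow ((1/(N:ℝ)^2)^2),
          ← pow_mul (1/(N:ℝ)^2), ← pow_mul (S x)]
        ring
      have hint1 : ∫ x, g (k+1) x ∂μN = c * ∫ x, S x ^ (2*(k+1)) ∂μN := by
        rw [integral_congr_ae (Filter.Eventually.of_forall hgc), integral_const_mul]
      have hstep : ∫ x, g (k+1) x ∂μN ≤ α^(k+1) := by
        rw [hint1]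
        calc c * ∫ x, S x ^ (2*(k+1)) ∂μN
            ≤ c * (((k+1:ℕ) : ℝ) ^ (k+1) * (N : ℝ) ^ (3*(k+1)) * 625 ^ (k+1) * Cφ ^ (2*(k+1))) :=
              mul_le_mul_of_nonneg_left hSmom hc0
          _ = (((k+1:ℕ):ℝ) ^ (k+1) / ((k+1).factorial : ℝ)) * (625 ^ (k+1) * Cφ ^ (2*(k+1)))
                * ((N:ℝ)^(k+1) * (1/(N:ℝ)^2)^(2*(k+1)) * (N : ℝ) ^ (3*(k+1))) := by
              rw [hc]; ring
          _ = (((k+1:ℕ):ℝ) ^ (k+1) / ((k+1).factorial : ℝ)) * (625 ^ (k+1) * Cφ ^ (2*(k+1))) := by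
              have hN0 : (N:ℝ) ≠ 0 := ne_of_gt hNR
              have : (N:ℝ)^(k+1) * (1/(N:ℝ)^2)^(2*(k+1)) * (N : ℝ) ^ (3*(k+1)) = 1 := by
                rw [div_pow, one_pow, ← pow_mul]
                field_simp
                rw [← pow_add]
                congr 1
                ring
              rw [this, mul_one]
          _ ≤ Real.exp 1 ^ (k+1) * (625 ^ (k+1) * Cφ ^ (2*(k+1))) := by
              apply mul_le_mul_of_nonneg_right hee (by positivity)
          _ = (Real.exp 1 * 625 * Cφ^2) ^ (k+1) := by
              rw [pow_mul (Cφ) 2, ← mul_pow, ← mul_pow, mul_assoc]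
          _ ≤ (Real.exp 9 * Cφ^2) ^ (k+1) := by
              apply pow_le_pow_left₀ (by positivity)
              apply mul_le_mul_of_nonneg_right ?_ (by positivity)
              have h8 : (625:ℝ) ≤ Real.exp 1 ^ 8 := by
                calc (625:ℝ) ≤ 2.7182818283 ^ 8 := by norm_num
                  _ ≤ Real.exp 1 ^ 8 :=
                    pow_le_pow_left₀ (by norm_num) Real.exp_one_gt_d9.le 8
              calc Real.exp 1 * 625 ≤ Real.exp 1 * Real.exp 1 ^ 8 := by
                    apply mul_le_mul_of_nonneg_left h8 (Real.exp_pos 1).le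
                _ = Real.exp 9 := by
                    rw [Real.exp_one_pow, ← Real.exp_add]; norm_num
      have : (0:ℝ) ≤ β^(k+1) := by positivity
      rw [hα']
      linarith [hstep]
    · -- β branch
      push_neg at hcase
      have hNk : (N:ℝ) ≤ ((k+1:ℕ):ℝ) := by exact_mod_cast (by omega : N ≤ k+1)
      have hstep : ∫ x, g (k+1) x ∂μN ≤ β^(k+1) := by
        calc ∫ x, g (k+1) x ∂μN
            ≤ ∫ _x, ((N:ℝ) * Cφ ^ 2) ^ (k+1) / (k+1).factorial ∂μN :=
              integral_mono (hgInt (k+1)) (integrable_const _)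
                (fun x => hgb (k+1) x)
          _ = ((N:ℝ) * Cφ ^ 2) ^ (k+1) / (k+1).factorial := by
              simp
          _ = ((N:ℝ)^(k+1) / ((k+1).factorial : ℝ)) * (Cφ^2) ^ (k+1) := by
              rw [mul_pow]; ring
          _ ≤ (((k+1:ℕ):ℝ)^(k+1) / ((k+1).factorial : ℝ)) * (Cφ^2) ^ (k+1) := by
              apply mul_le_mul_of_nonneg_right ?_ (by positivity)
              apply (div_le_div_iff_of_pos_right hkk).mpr
              exact pow_le_pow_left₀ hNR.le hNk (k+1)
          _ ≤ Real.exp 1 ^ (k+1) * (Cφ^2) ^ (k+1) :=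
              mul_le_mul_of_nonneg_right hee (by positivity)
          _ = (Real.exp 1 * Cφ^2) ^ (k+1) := by rw [← mul_pow]
          _ ≤ (4 * Real.exp 1 * Cφ^2) ^ (k+1) := by
              apply pow_le_pow_left₀ (by positivity)
              nlinarith [Real.exp_pos 1, sq_nonneg Cφ]
      have : (0:ℝ) ≤ α^(k+1) := by positivity
      rw [hβ']
      linarith [hstep]
  -- series assembly
  have hser : ∀ x, ENNReal.ofReal (Real.exp ((N:ℝ) * |X x| ^ 2))
      = ∑' k, ENNReal.ofReal (g k x) := by
    intro x
    rw [sq_abs]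
    have hexp : Real.exp ((N:ℝ) * X x ^ 2)
        = ∑' k : ℕ, ((N:ℝ) * X x ^ 2) ^ k / k.factorial := by
      rw [Real.exp_eq_exp_ℝ, NormedSpace.exp_eq_tsum_div]
    rw [hexp]
    exact ENNReal.ofReal_tsum_of_nonneg (fun k => hg0 k x)
      (Real.summable_pow_div_factorial _)
  have hg0int : ∫ x, g 0 x ∂μN = 1 := by
    simp only [hg, pow_zero, Nat.factorial_zero, Nat.cast_one, div_one]
    simp
  have hsum0 : (0:ℝ) ≤ α / (1 - α) := by
    apply div_nonneg hα0
    linarith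
  have hsum0' : (0:ℝ) ≤ β / (1 - β) := by
    apply div_nonneg hβ0
    linarith
  have hsummα : Summable fun k : ℕ => α ^ (k+1) := by
    apply Summable.mul_left α (summable_geometric_of_lt_one hα0 hα1) |>.congr
    intro k
    rw [pow_succ]
    ring
  have hsummβ : Summable fun k : ℕ => β ^ (k+1) := by
    apply Summable.mul_left β (summable_geometric_of_lt_one hβ0 hβ1) |>.congr
    intro k
    rw [pow_succ]
    ring
  have hgeomα : ∑' k : ℕ, α ^ (k+1) = α / (1 - α) := by
    have h1 : ∑' k : ℕ, α ^ (k+1) = α * ∑' k : ℕ, α ^ k := by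
      rw [← tsum_mul_left]
      exact tsum_congr fun k => by rw [pow_succ]; ring
    rw [h1, tsum_geometric_of_lt_one hα0 hα1, div_eq_mul_inv]
  have hgeomβ : ∑' k : ℕ, β ^ (k+1) = β / (1 - β) := by
    have h1 : ∑' k : ℕ, β ^ (k+1) = β * ∑' k : ℕ, β ^ k := by
      rw [← tsum_mul_left]
      exact tsum_congr fun k => by rw [pow_succ]; ring
    rw [h1, tsum_geometric_of_lt_one hβ0 hβ1, div_eq_mul_inv]
  calc ∫⁻ x : Fin N → (Fin d → ℝ),
          ENNReal.ofReal
            (Real.exp ((N : ℝ) *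
              |(1 / (N : ℝ) ^ 2) * ∑ i : Fin N, ∑ j : Fin N, φ (x i) (x j)| ^ 2)) ∂μN
      = ∫⁻ x, ∑' k, ENNReal.ofReal (g k x) ∂μN := lintegral_congr fun x => hser x
    _ = ∑' k, ∫⁻ x, ENNReal.ofReal (g k x) ∂μN :=
        lintegral_tsum fun k => (ENNReal.measurable_ofReal.comp (hgm k)).aemeasurable
    _ = ∑' k, ENNReal.ofReal (∫ x, g k x ∂μN) := by
        refine tsum_congr fun k => ?_
        exact (ofReal_integral_eq_lintegral_ofReal (hgInt k)
          (Filter.Eventually.of_forall (hg0 k))).symm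
    _ = ENNReal.ofReal (∫ x, g 0 x ∂μN)
          + ∑' k, ENNReal.ofReal (∫ x, g (k+1) x ∂μN) :=
        tsum_eq_zero_add' ENNReal.summable
    _ ≤ ENNReal.ofReal 1 + (ENNReal.ofReal (α / (1 - α)) + ENNReal.ofReal (β / (1 - β))) := by
        apply add_le_add
        · rw [hg0int]
        · calc ∑' k, ENNReal.ofReal (∫ x, g (k+1) x ∂μN)
              ≤ ∑' k : ℕ, (ENNReal.ofReal (α^(k+1)) + ENNReal.ofReal (β^(k+1))) := by
                apply ENNReal.tsum_le_tsum
                intro k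
                refine le_trans (ENNReal.ofReal_le_ofReal (hbound k)) ?_
                rw [ENNReal.ofReal_add (by positivity) (by positivity)]
            _ = (∑' k : ℕ, ENNReal.ofReal (α^(k+1)))
                  + ∑' k : ℕ, ENNReal.ofReal (β^(k+1)) := ENNReal.tsum_add
            _ = ENNReal.ofReal (α / (1 - α)) + ENNReal.ofReal (β / (1 - β)) := by
                rw [← ENNReal.ofReal_tsum_of_nonneg (fun k => by positivity) hsummα,
                  ← ENNReal.ofReal_tsum_of_nonneg (fun k => by positivity) hsummβ,
                  hgeomα, hgeomβ]
    _ = ENNReal.ofReal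
          (1 + α / (1 - α) + β / (1 - β)) := by
        rw [← ENNReal.ofReal_add hsum0 hsum0',
          ← ENNReal.ofReal_add (by norm_num : (0:ℝ) ≤ 1) (add_nonneg hsum0 hsum0')]
        congr 1
        ring
end

section
/- Let ρ̄ be a probability measure on ℝ^d and φ ∈ L^∞(ℝ^d × ℝ^d) with ∫∫ ρ̄(dy) ρ̄(dz) φ(y,z) = 0 and ‖φ‖_{L^∞} sufficiently small. Then there exists a finite constant C, independent of N, such that ∫_{ℝ^{dN}} exp( N | ⟨φ, μ_N ⊗ μ_N⟩ |⁴ ) ρ̄^{⊗N}(dx) ≤ C for all N ≥ 2. -/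
open MeasureTheory Real

namespace Stmt3Aux

/-! ### Arithmetic helpers -/

lemma pow_self_le_exp_mul_factorial (k : ℕ) :
    (k : ℝ) ^ k ≤ Real.exp 1 ^ k * (k.factorial : ℝ) := by
  have h1 : (k : ℝ) ^ k / (k.factorial : ℝ) ≤ Real.exp k := by
    calc (k : ℝ) ^ k / (k.factorial : ℝ)
        ≤ ∑ i ∈ Finset.range (k + 1), (k : ℝ) ^ i / (i.factorial : ℝ) := by
          refine Finset.single_le_sum (f := fun i => (k : ℝ) ^ i / (i.factorial : ℝ))
            (fun i _ => by positivity) ?_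
          simp
      _ ≤ Real.exp k := Real.sum_le_exp_of_nonneg (by positivity) _
  have h2 : Real.exp k = Real.exp 1 ^ k := by
    rw [← Real.exp_nat_mul]; norm_num
  have hk : (0 : ℝ) < (k.factorial : ℝ) := by exact_mod_cast k.factorial_pos
  rw [div_le_iff₀ hk] at h1
  calc (k : ℝ) ^ k ≤ Real.exp k * k.factorial := h1
    _ = Real.exp 1 ^ k * k.factorial := by rw [h2]

/-! ### Counting -/

variable {p N : ℕ}

/-- the set of indices used by a tuple of pairs -/
def idx (f : Fin p → Fin N × Fin N) : Finset (Fin N) :=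
  (Finset.image (fun l => (f l).1) Finset.univ) ∪ (Finset.image (fun l => (f l).2) Finset.univ)

/-- number of occurrences of an index among all slots -/
def occ (f : Fin p → Fin N × Fin N) (i : Fin N) : ℕ :=
  ∑ l : Fin p, ((if (f l).1 = i then 1 else 0) + (if (f l).2 = i then 1 else 0))

/-- a tuple is good if in every factor at least one index occurs at least twice -/
def Good (f : Fin p → Fin N × Fin N) : Prop :=
  ∀ l, 2 ≤ occ f (f l).1 ∨ 2 ≤ occ f (f l).2

lemma occ_pos_iff {f : Fin p → Fin N × Fin N} {i : Fin N} :
    1 ≤ occ f i ↔ ∃ l, (f l).1 = i ∨ (f l).2 = i := by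
  constructor
  · intro h
    by_contra hc
    push_neg at hc
    have hz : occ f i = 0 := Finset.sum_eq_zero fun l _ => by
      have := hc l
      simp [this.1, this.2]
    omega
  · rintro ⟨l, hl⟩
    have h1 : 1 ≤ (if (f l).1 = i then 1 else 0) + (if (f l).2 = i then 1 else 0) := by
      rcases hl with h | h <;> simp [h]
    exact h1.trans (Finset.single_le_sum (f := fun l =>
      (if (f l).1 = i then 1 else 0) + (if (f l).2 = i then 1 else 0))
      (fun _ _ => Nat.zero_le _) (Finset.mem_univ l))

lemma mem_idx_iff {f : Fin p → Fin N × Fin N} {i : Fin N} :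
    i ∈ idx f ↔ ∃ l, (f l).1 = i ∨ (f l).2 = i := by
  simp only [idx, Finset.mem_union, Finset.mem_image, Finset.mem_univ, true_and]
  rw [← exists_or]

lemma occ_two_of_pair {f : Fin p → Fin N × Fin N} {i : Fin N} {a b : Fin p} (hab : a ≠ b)
    (ha : (f a).1 = i ∨ (f a).2 = i) (hb : (f b).1 = i ∨ (f b).2 = i) :
    2 ≤ occ f i := by
  set t : Fin p → ℕ := fun l => (if (f l).1 = i then 1 else 0) + (if (f l).2 = i then 1 else 0)
    with ht
  have hta : 1 ≤ t a := by rcases ha with h | h <;> simp [t, h]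
  have htb : 1 ≤ t b := by rcases hb with h | h <;> simp [t, h]
  have : t a + t b ≤ ∑ l, t l := by
    rw [← Finset.add_sum_erase _ t (Finset.mem_univ a)]
    exact Nat.add_le_add_left (Finset.single_le_sum (f := t) (fun _ _ => Nat.zero_le _)
      (Finset.mem_erase.mpr ⟨hab.symm, Finset.mem_univ b⟩)) _
  calc 2 ≤ t a + t b := by omega
    _ ≤ _ := this

lemma occ_sum (f : Fin p → Fin N × Fin N) : ∑ i, occ f i = 2 * p := by
  unfold occ
  rw [Finset.sum_comm]
  have h : ∀ l ∈ (Finset.univ : Finset (Fin p)),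
      (∑ i, ((if (f l).1 = i then 1 else 0) + (if (f l).2 = i then 1 else 0))) = 2 := by
    intro l _
    rw [Finset.sum_add_distrib]
    have h1 : (∑ i, if (f l).1 = i then 1 else 0) = 1 := by
      rw [Finset.sum_ite_eq]; simp
    have h2 : (∑ i, if (f l).2 = i then 1 else 0) = 1 := by
      rw [Finset.sum_ite_eq]; simp
    rw [h1, h2]
  rw [Finset.sum_congr rfl h]
  simp [mul_comm]

open Classical in
lemma good_idx_card {f : Fin p → Fin N × Fin N} (h : Good f) :
    2 * (idx f).card ≤ 3 * p := by
  classical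
  rcases Nat.eq_zero_or_pos p with hp | hp
  · subst hp
    have : idx f = ∅ := by
      ext i; simp [idx, Fin.isEmpty']
    simp [this]
  have : NeZero p := ⟨by omega⟩
  set V := idx f with hV
  set U := V.filter (fun i => occ f i = 1) with hU
  set W := V.filter (fun i => ¬ occ f i = 1) with hW
  have hcard : U.card + W.card = V.card := Finset.card_filter_add_card_filter_not _
  have hUcard : U.card ≤ p := by
    have hmap : ∀ i : Fin N, ∃ l : Fin p, i ∈ U → ((f l).1 = i ∨ (f l).2 = i) := by
      intro i
      by_cases hi : i ∈ U
      · obtain ⟨l, hl⟩ := mem_idx_iff.mp (Finset.mem_filter.mp hi).1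
        exact ⟨l, fun _ => hl⟩
      · exact ⟨0, fun h' => absurd h' hi⟩
    choose g hg using hmap
    have hinj : Set.InjOn g U := by
      intro i hi i' hi' hgeq
      by_contra hne
      have hocc1 : occ f i = 1 := (Finset.mem_filter.mp hi).2
      have hocc1' : occ f i' = 1 := (Finset.mem_filter.mp hi').2
      have h1 := hg i hi
      have h2 := hg i' hi'
      rw [← hgeq] at h2
      set l := g i with hl
      have hgood := h l
      have hbad : occ f (f l).1 = 1 ∧ occ f (f l).2 = 1 := by
        rcases h1 with e1 | e1 <;> rcases h2 with e2 | e2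
        · exact absurd (e1.symm.trans e2) hne
        · exact ⟨e1.symm ▸ hocc1, e2.symm ▸ hocc1'⟩
        · exact ⟨e2.symm ▸ hocc1', e1.symm ▸ hocc1⟩
        · exact absurd (e1.symm.trans e2) hne
      omega
    calc U.card ≤ (Finset.univ : Finset (Fin p)).card :=
          Finset.card_le_card_of_injOn g (fun _ _ => Finset.mem_univ _) hinj
      _ = p := by simp
  have hsumV : ∑ i ∈ V, occ f i ≤ 2 * p := by
    rw [← occ_sum f]
    exact Finset.sum_le_sum_of_subset (Finset.subset_univ V)
  have hsplit : ∑ i ∈ U, occ f i + ∑ i ∈ W, occ f i = ∑ i ∈ V, occ f i :=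
    Finset.sum_filter_add_sum_filter_not V _ _
  have hsumU : ∑ i ∈ U, occ f i = U.card := by
    rw [Finset.sum_congr rfl (fun i hi => (Finset.mem_filter.mp hi).2)]
    simp
    rfl
  have hsumW : 2 * W.card ≤ ∑ i ∈ W, occ f i := by
    have := Finset.card_nsmul_le_sum W (occ f) 2 (fun i hi => by
      have h1 : i ∈ V := (Finset.mem_filter.mp hi).1
      have h2 : ¬ occ f i = 1 := (Finset.mem_filter.mp hi).2
      have h3 : 1 ≤ occ f i := occ_pos_iff.mpr (mem_idx_iff.mp h1)
      omega)
    simpa [smul_eq_mul, mul_comm] using this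
  omega

/-- a canonical superset of `idx f` of cardinality `R` -/
noncomputable def AA (R : ℕ) (f : Fin p → Fin N × Fin N) : Finset (Fin N) :=
  if h : (idx f).card ≤ R ∧ R ≤ N then
    Classical.choose (Finset.exists_subsuperset_card_eq (Finset.subset_univ (idx f)) h.1
      (by simpa using h.2))
  else ∅

lemma AA_spec {R : ℕ} {f : Fin p → Fin N × Fin N} (hidx : (idx f).card ≤ R) (hR : R ≤ N) :
    idx f ⊆ AA R f ∧ (AA R f).card = R := by
  unfold AA
  rw [dif_pos ⟨hidx, hR⟩]
  obtain ⟨h1, _, h3⟩ := Classical.choose_spec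
    (Finset.exists_subsuperset_card_eq (Finset.subset_univ (idx f)) hidx
      (by simpa using hR : R ≤ (Finset.univ : Finset (Fin N)).card))
  exact ⟨h1, h3⟩

/-- encoding of a tuple with small index set -/
noncomputable def enc (R : ℕ) (f : Fin p → Fin N × Fin N) (l : Fin p) : ℕ × ℕ :=
  if h : (f l).1 ∈ AA R f ∧ (f l).2 ∈ AA R f ∧ (AA R f).card = R then
    (((((AA R f).orderIsoOfFin h.2.2).symm ⟨(f l).1, h.1⟩ : Fin R) : ℕ),
     ((((AA R f).orderIsoOfFin h.2.2).symm ⟨(f l).2, h.2.1⟩ : Fin R) : ℕ))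
  else (0, 0)

lemma enc_cond {R : ℕ} {f : Fin p → Fin N × Fin N} (hidx : (idx f).card ≤ R) (hR : R ≤ N)
    (l : Fin p) : (f l).1 ∈ AA R f ∧ (f l).2 ∈ AA R f ∧ (AA R f).card = R := by
  obtain ⟨hsub, hcard⟩ := AA_spec hidx hR
  exact ⟨hsub (mem_idx_iff.mpr ⟨l, Or.inl rfl⟩), hsub (mem_idx_iff.mpr ⟨l, Or.inr rfl⟩), hcard⟩

lemma enc_spec {R : ℕ} {f : Fin p → Fin N × Fin N} (l : Fin p)
    (h : (f l).1 ∈ AA R f ∧ (f l).2 ∈ AA R f ∧ (AA R f).card = R) :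
    enc R f l = (((((AA R f).orderIsoOfFin h.2.2).symm ⟨(f l).1, h.1⟩ : Fin R) : ℕ),
     ((((AA R f).orderIsoOfFin h.2.2).symm ⟨(f l).2, h.2.1⟩ : Fin R) : ℕ)) := by
  unfold enc
  rw [dif_pos h]

lemma code_inj {N R : ℕ} {A A' : Finset (Fin N)} (hAA' : A = A') (hc : A.card = R)
    (hc' : A'.card = R) {a b : Fin N} (ha : a ∈ A) (hb : b ∈ A')
    (hval : (((A.orderIsoOfFin hc).symm ⟨a, ha⟩ : Fin R) : ℕ)
      = (((A'.orderIsoOfFin hc').symm ⟨b, hb⟩ : Fin R) : ℕ)) : a = b := by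
  subst hAA'
  rw [Subsingleton.elim hc' hc] at hval
  have h2 : (A.orderIsoOfFin hc).symm ⟨a, ha⟩ = (A.orderIsoOfFin hc).symm ⟨b, hb⟩ :=
    Fin.ext hval
  have h3 := congrArg (A.orderIsoOfFin hc) h2
  rw [OrderIso.apply_symm_apply, OrderIso.apply_symm_apply] at h3
  exact congrArg Subtype.val h3

open Classical in
lemma card_filter_idx_le (R : ℕ) (hR : R ≤ N) :
    (Finset.univ.filter (fun f : Fin p → Fin N × Fin N => (idx f).card ≤ R)).card
      ≤ N.choose R * (R * R) ^ p := by
  classical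
  have hcardT : ((Finset.powersetCard R (Finset.univ : Finset (Fin N))) ×ˢ
      Fintype.piFinset (fun _ : Fin p => (Finset.range R) ×ˢ (Finset.range R))).card
      = N.choose R * (R * R) ^ p := by
    rw [Finset.card_product, Finset.card_powersetCard, Finset.card_univ, Fintype.card_fin,
      Fintype.card_piFinset_const, Finset.card_product, Finset.card_range]
  rw [← hcardT]
  refine Finset.card_le_card_of_injOn (fun f => (AA R f, enc R f)) ?_ ?_
  · intro f hf
    have h : (idx f).card ≤ R := (Finset.mem_filter.mp hf).2
    obtain ⟨hsub, hcard⟩ := AA_spec h hR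
    rw [Finset.mem_coe, Finset.mem_product]
    refine ⟨Finset.mem_powersetCard.mpr ⟨Finset.subset_univ _, hcard⟩, ?_⟩
    rw [Fintype.mem_piFinset]
    intro l
    show enc R f l ∈ Finset.range R ×ˢ Finset.range R
    rw [enc_spec l (enc_cond h hR l), Finset.mem_product]
    exact ⟨Finset.mem_range.mpr (Fin.is_lt _), Finset.mem_range.mpr (Fin.is_lt _)⟩
  · intro f hf f' hf' heq
    simp only [Finset.coe_filter, Set.mem_setOf_eq] at hf hf'
    have h : (idx f).card ≤ R := hf.2
    have h' : (idx f').card ≤ R := hf'.2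
    have hA : AA R f = AA R f' := congrArg Prod.fst heq
    have hE : enc R f = enc R f' := congrArg Prod.snd heq
    funext l
    have hm := enc_cond h hR l
    have hm' := enc_cond h' hR l
    have hpair := congrFun hE l
    rw [enc_spec l hm, enc_spec l hm'] at hpair
    have hv1 := congrArg Prod.fst hpair
    have hv2 := congrArg Prod.snd hpair
    simp only at hv1 hv2
    exact Prod.ext (code_inj hA hm.2.2 hm'.2.2 hm.1 hm'.1 hv1)
      (code_inj hA hm.2.2 hm'.2.2 hm.2.1 hm'.2.1 hv2)

/-! ### Measure-theoretic part -/

variable {E : Type*} [MeasurableSpace E] [Nonempty E]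
variable {ρ : Measure E} [IsProbabilityMeasure ρ]
variable {φ : E → E → ℝ}

lemma meas_pair (hφm : Measurable (Function.uncurry φ)) {N : ℕ} (i j : Fin N) :
    Measurable (fun x : Fin N → E => φ (x i) (x j)) := by
  have : (fun x : Fin N → E => φ (x i) (x j)) =
      (Function.uncurry φ) ∘ (fun x => (x i, x j)) := rfl
  rw [this]
  exact hφm.comp ((measurable_pi_apply i).prodMk (measurable_pi_apply j))

lemma integrable_of_bound {X : Type*} [MeasurableSpace X] (μ : Measure X) [IsFiniteMeasure μ]
    (f : X → ℝ) (hf : Measurable f) (c : ℝ) (h : ∀ x, |f x| ≤ c) : Integrable f μ :=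
  (integrable_const c).mono' hf.aestronglyMeasurable (Filter.Eventually.of_forall fun x => by
    simpa [Real.norm_eq_abs] using h x)

/-- Key splitting lemma: if `G` does not depend on coordinates `i ≠ j`, the integral of
`φ (x i) (x j) * G x` against the product measure factorizes. -/
lemma split_integral (hφm : Measurable (Function.uncurry φ)) (Cφ : ℝ)
    (hφb : ∀ x y, |φ x y| ≤ Cφ)
    {N : ℕ} {i j : Fin N} (hij : i ≠ j)
    (G : (Fin N → E) → ℝ) (hG : Measurable G) (cG : ℝ) (hGb : ∀ x, |G x| ≤ cG)
    (hGind : ∀ x y : Fin N → E, (∀ t, t ≠ i → t ≠ j → x t = y t) → G x = G y) :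
    ∫ x, φ (x i) (x j) * G x ∂(Measure.pi fun _ : Fin N => ρ)
      = (∫ y, ∫ z, φ y z ∂ρ ∂ρ) * ∫ x, G x ∂(Measure.pi fun _ : Fin N => ρ) := by
  classical
  set q : Fin N → Prop := fun t => t = i ∨ t = j with hq
  set e := MeasurableEquiv.piEquivPiSubtypeProd (fun _ : Fin N => E) q with he
  have hmp := measurePreserving_piEquivPiSubtypeProd (fun _ : Fin N => ρ) q
  set μ1 : Measure ({t // q t} → E) := Measure.pi fun _ => ρ with hμ1
  set μ2 : Measure ({t // ¬ q t} → E) := Measure.pi fun _ => ρ with hμ2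
  have hiq : q i := Or.inl rfl
  have hjq : q j := Or.inr rfl
  set a₀ : {t // q t} → E := fun _ => Classical.arbitrary E with ha₀
  set H1 : ({t // q t} → E) → ℝ := fun a => φ (a ⟨i, hiq⟩) (a ⟨j, hjq⟩) with hH1
  set H2 : ({t // ¬ q t} → E) → ℝ := fun b => G (e.symm (a₀, b)) with hH2
  -- the inverse equiv pointwise
  have hesymm : ∀ (a : {t // q t} → E) (b : {t // ¬ q t} → E) (t : Fin N),
      e.symm (a, b) t = if h : q t then a ⟨t, h⟩ else b ⟨t, h⟩ := by
    intro a b t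
    rfl
  have hsplit1 : ∀ (a : {t // q t} → E) (b : {t // ¬ q t} → E),
      φ ((e.symm (a, b)) i) ((e.symm (a, b)) j) = H1 a := by
    intro a b
    rw [hesymm a b i, hesymm a b j, dif_pos hiq, dif_pos hjq]
  have hsplit2 : ∀ (a : {t // q t} → E) (b : {t // ¬ q t} → E),
      G (e.symm (a, b)) = H2 b := by
    intro a b
    refine hGind _ _ fun t hti htj => ?_
    have hqt : ¬ q t := fun h => h.elim hti htj
    rw [hesymm a b t, hesymm a₀ b t, dif_neg hqt, dif_neg hqt]
  have hcomp : ∀ (F : (Fin N → E) → ℝ),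
      ∫ x, F x ∂(Measure.pi fun _ : Fin N => ρ) = ∫ y, F (e.symm y) ∂(μ1.prod μ2) := by
    intro F
    rw [← hmp.integral_comp e.measurableEmbedding (fun y => F (e.symm y))]
    simp only [he, MeasurableEquiv.symm_apply_apply]
  -- left-hand side
  have hLHS : ∫ x, φ (x i) (x j) * G x ∂(Measure.pi fun _ : Fin N => ρ)
      = (∫ a, H1 a ∂μ1) * ∫ b, H2 b ∂μ2 := by
    rw [hcomp (fun x => φ (x i) (x j) * G x)]
    have : ∀ y : ({t // q t} → E) × ({t // ¬ q t} → E),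
        φ ((e.symm y) i) ((e.symm y) j) * G (e.symm y) = H1 y.1 * H2 y.2 := by
      intro y
      rw [hsplit1 y.1 y.2, hsplit2 y.1 y.2]
    simp only [this]
    exact integral_prod_mul H1 H2
  -- G integral
  have hGint : ∫ x, G x ∂(Measure.pi fun _ : Fin N => ρ) = ∫ b, H2 b ∂μ2 := by
    rw [hcomp G]
    have : ∀ y : ({t // q t} → E) × ({t // ¬ q t} → E),
        G (e.symm y) = (fun _ => (1:ℝ)) y.1 * H2 y.2 := by
      intro y
      rw [hsplit2 y.1 y.2, one_mul]
    simp only [this]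
    rw [integral_prod_mul (fun _ => (1:ℝ)) H2]
    simp
  -- H1 integral
  have hH1int : ∫ a, H1 a ∂μ1 = ∫ y, ∫ z, φ y z ∂ρ ∂ρ := by
    -- identify the two-point subtype with `Fin 2`
    have hstep : ∀ t : {t // q t}, t = ⟨i, hiq⟩ ∨ t = ⟨j, hjq⟩ := by
      rintro ⟨t, ht | ht⟩
      · left; exact Subtype.ext ht
      · right; exact Subtype.ext ht
    set ε : Fin 2 ≃ {t // q t} :=
      { toFun := ![⟨i, hiq⟩, ⟨j, hjq⟩]
        invFun := fun t => if t.1 = i then 0 else 1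
        left_inv := by
          intro l
          fin_cases l <;> simp [hij.symm]
        right_inv := by
          intro t
          rcases hstep t with ht | ht <;> subst ht <;> simp [hij.symm] } with hε
    have hmp2 := measurePreserving_piCongrLeft (fun _ : {t // q t} => ρ) ε
    have hmp3 := measurePreserving_finTwoArrow (α := E) ρ
    rw [← hmp2.integral_comp (MeasurableEquiv.piCongrLeft (fun _ => E) ε).measurableEmbedding H1]
    have hev : ∀ v : Fin 2 → E,
        H1 ((MeasurableEquiv.piCongrLeft (fun _ : {t // q t} => E) ε) v) = φ (v 0) (v 1) := by
      intro v
      rw [hH1]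
      simp only [MeasurableEquiv.coe_piCongrLeft]
      have h0 : (Equiv.piCongrLeft (fun _ : {t // q t} => E) ε) v (ε 0) = v 0 :=
        Equiv.piCongrLeft_apply_apply (fun _ : {t // q t} => E) ε v 0
      have h1 : (Equiv.piCongrLeft (fun _ : {t // q t} => E) ε) v (ε 1) = v 1 :=
        Equiv.piCongrLeft_apply_apply (fun _ : {t // q t} => E) ε v 1
      have hε0 : ε 0 = ⟨i, hiq⟩ := rfl
      have hε1 : ε 1 = ⟨j, hjq⟩ := rfl
      rw [hε0] at h0
      rw [hε1] at h1
      rw [h0, h1]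
    simp only [hev]
    have h5 : (∫ x : Fin 2 → E, φ (x 0) (x 1) ∂(Measure.pi fun _ : Fin 2 => ρ))
        = ∫ c : E × E, φ c.1 c.2 ∂(ρ.prod ρ) :=
      hmp3.integral_comp MeasurableEquiv.finTwoArrow.measurableEmbedding
        (fun c : E × E => φ c.1 c.2)
    rw [h5]
    exact integral_prod (fun c : E × E => φ c.1 c.2)
      (integrable_of_bound (ρ.prod ρ) _ hφm Cφ (fun c => hφb c.1 c.2))
  rw [hLHS, hGint, hH1int]

section N

variable (φ) (N p : ℕ)

/-- product of factors -/
def P (f : Fin p → Fin N × Fin N) (x : Fin N → E) : ℝ :=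
  ∏ l, φ (x (f l).1) (x (f l).2)

variable {φ} {N p}

lemma measurable_P (hφm : Measurable (Function.uncurry φ)) (f : Fin p → Fin N × Fin N) :
    Measurable (P φ N p f) :=
  Finset.measurable_prod _ fun l _ => meas_pair hφm _ _

lemma abs_P_le (Cφ : ℝ) (hCφ : 0 ≤ Cφ) (hφb : ∀ x y, |φ x y| ≤ Cφ)
    (f : Fin p → Fin N × Fin N) (x : Fin N → E) : |P φ N p f x| ≤ Cφ ^ p := by
  rw [P, Finset.abs_prod]
  calc ∏ l, |φ (x (f l).1) (x (f l).2)| ≤ ∏ _l : Fin p, Cφ :=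
        Finset.prod_le_prod (fun _ _ => abs_nonneg _) (fun l _ => hφb _ _)
    _ = Cφ ^ p := by simp

lemma expand_pow (hφm : Measurable (Function.uncurry φ)) (Cφ : ℝ) (hCφ : 0 ≤ Cφ)
    (hφb : ∀ x y, |φ x y| ≤ Cφ) :
    ∫ x, (∑ i, ∑ j, φ (x i) (x j)) ^ p ∂(Measure.pi fun _ : Fin N => ρ)
      = ∑ f : Fin p → Fin N × Fin N, ∫ x, P φ N p f x ∂(Measure.pi fun _ : Fin N => ρ) := by
  have hptw : ∀ x : Fin N → E, (∑ i, ∑ j, φ (x i) (x j)) ^ p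
      = ∑ f : Fin p → Fin N × Fin N, P φ N p f x := by
    intro x
    have hsum : ∑ i, ∑ j, φ (x i) (x j) = ∑ q : Fin N × Fin N, φ (x q.1) (x q.2) :=
      (Fintype.sum_prod_type (f := fun q : Fin N × Fin N => φ (x q.1) (x q.2))).symm
    rw [hsum]
    exact Fintype.sum_pow (fun q : Fin N × Fin N => φ (x q.1) (x q.2)) p
  simp_rw [hptw]
  exact integral_finset_sum _ fun f _ =>
    integrable_of_bound _ _ (measurable_P hφm f) _ (abs_P_le Cφ hCφ hφb f)

lemma vanish (hφm : Measurable (Function.uncurry φ)) (Cφ : ℝ) (hCφ : 0 ≤ Cφ)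
    (hφb : ∀ x y, |φ x y| ≤ Cφ)
    (hcanc : ∫ y, ∫ z, φ y z ∂ρ ∂ρ = 0)
    {f : Fin p → Fin N × Fin N} (hbad : ¬ Good f) :
    ∫ x, P φ N p f x ∂(Measure.pi fun _ : Fin N => ρ) = 0 := by
  classical
  rw [Good] at hbad
  push_neg at hbad
  obtain ⟨l₀, h1, h2⟩ := hbad
  set i := (f l₀).1 with hi
  set j := (f l₀).2 with hj
  have hocci : 1 ≤ occ f i := occ_pos_iff.mpr ⟨l₀, Or.inl rfl⟩
  have hoccj : 1 ≤ occ f j := occ_pos_iff.mpr ⟨l₀, Or.inr rfl⟩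
  have hij : i ≠ j := by
    intro he
    have : 2 ≤ occ f i := by
      have ht : 2 ≤ (if (f l₀).1 = i then 1 else 0) + (if (f l₀).2 = i then 1 else 0) := by
        rw [if_pos hi.symm, if_pos (hj ▸ he.symm)]
      exact ht.trans (Finset.single_le_sum (f := fun l =>
        (if (f l).1 = i then 1 else 0) + (if (f l).2 = i then 1 else 0))
        (fun _ _ => Nat.zero_le _) (Finset.mem_univ l₀))
    omega
  have hnotin : ∀ l : Fin p, l ≠ l₀ → (f l).1 ≠ i ∧ (f l).2 ≠ i ∧ (f l).1 ≠ j ∧ (f l).2 ≠ j := by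
    intro l hl
    refine ⟨?_, ?_, ?_, ?_⟩ <;> intro he
    · exact absurd (occ_two_of_pair hl (Or.inl he) (Or.inl rfl)) (by omega)
    · exact absurd (occ_two_of_pair hl (Or.inr he) (Or.inl rfl)) (by omega)
    · exact absurd (occ_two_of_pair hl (Or.inl he) (Or.inr rfl)) (by omega)
    · exact absurd (occ_two_of_pair hl (Or.inr he) (Or.inr rfl)) (by omega)
  set G : (Fin N → E) → ℝ := fun x => ∏ l ∈ Finset.univ.erase l₀, φ (x (f l).1) (x (f l).2)
    with hGdef
  have hfact : ∀ x : Fin N → E, P φ N p f x = φ (x i) (x j) * G x := by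
    intro x
    rw [P, hGdef, ← Finset.mul_prod_erase Finset.univ _ (Finset.mem_univ l₀)]
  have hGmeas : Measurable G := Finset.measurable_prod _ fun l _ => meas_pair hφm _ _
  have hGb : ∀ x, |G x| ≤ Cφ ^ (Finset.univ.erase l₀).card := by
    intro x
    rw [hGdef, Finset.abs_prod]
    calc ∏ l ∈ Finset.univ.erase l₀, |φ (x (f l).1) (x (f l).2)|
        ≤ ∏ _l ∈ Finset.univ.erase l₀, Cφ :=
          Finset.prod_le_prod (fun _ _ => abs_nonneg _) (fun l _ => hφb _ _)
      _ = Cφ ^ (Finset.univ.erase l₀).card := by rw [Finset.prod_const]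
  have hGind : ∀ x y : Fin N → E, (∀ t, t ≠ i → t ≠ j → x t = y t) → G x = G y := by
    intro x y hxy
    rw [hGdef]
    refine Finset.prod_congr rfl fun l hl => ?_
    have hl' := hnotin l (Finset.mem_erase.mp hl).1
    rw [hxy (f l).1 hl'.1 hl'.2.2.1, hxy (f l).2 hl'.2.1 hl'.2.2.2]
  have := split_integral (ρ := ρ) hφm Cφ hφb hij G hGmeas _ hGb hGind
  simp only [hfact]
  rw [this, hcanc, zero_mul]

open Classical in
lemma moment_bound (hφm : Measurable (Function.uncurry φ)) (Cφ : ℝ) (hCφ : 0 ≤ Cφ)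
    (hφb : ∀ x y, |φ x y| ≤ Cφ) (hcanc : ∫ y, ∫ z, φ y z ∂ρ ∂ρ = 0)
    (k : ℕ) (hkN : 6 * k ≤ N) :
    ∫ x, (∑ i, ∑ j, φ (x i) (x j)) ^ (4 * k) ∂(Measure.pi fun _ : Fin N => ρ)
      ≤ (N.choose (6 * k) : ℝ) * ((6 * k) * (6 * k) : ℕ) ^ (4 * k) * Cφ ^ (4 * k) := by
  set p := 4 * k with hp
  set μN := (Measure.pi fun _ : Fin N => ρ) with hμN
  have hCp : (0:ℝ) ≤ Cφ ^ p := by positivity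
  calc ∫ x, (∑ i, ∑ j, φ (x i) (x j)) ^ p ∂μN
      = ∑ f : Fin p → Fin N × Fin N, ∫ x, P φ N p f x ∂μN :=
        expand_pow hφm Cφ hCφ hφb
    _ = ∑ f : Fin p → Fin N × Fin N,
          (if Good f then ∫ x, P φ N p f x ∂μN else 0) := by
        refine Finset.sum_congr rfl fun f _ => ?_
        by_cases h : Good f
        · rw [if_pos h]
        · rw [if_neg h, vanish hφm Cφ hCφ hφb hcanc h]
    _ ≤ ∑ f : Fin p → Fin N × Fin N, (if Good f then Cφ ^ p else 0) := by
        refine Finset.sum_le_sum fun f _ => ?_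
        by_cases h : Good f
        · rw [if_pos h, if_pos h]
          calc ∫ x, P φ N p f x ∂μN ≤ ∫ _x, Cφ ^ p ∂μN :=
                integral_mono
                  (integrable_of_bound _ _ (measurable_P hφm f) _ (abs_P_le Cφ hCφ hφb f))
                  (integrable_const _)
                  (fun x => (abs_le.mp (abs_P_le Cφ hCφ hφb f x)).2)
            _ = Cφ ^ p := by simp
        · rw [if_neg h, if_neg h]
    _ = ((Finset.univ.filter (fun f : Fin p → Fin N × Fin N => Good f)).card : ℝ) * Cφ ^ p := by
        rw [← Finset.sum_filter, Finset.sum_const, nsmul_eq_mul]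
    _ ≤ ((Finset.univ.filter
          (fun f : Fin p → Fin N × Fin N => (idx f).card ≤ 6 * k)).card : ℝ) * Cφ ^ p := by
        refine mul_le_mul_of_nonneg_right ?_ hCp
        have hsub : (Finset.univ.filter (fun f : Fin p → Fin N × Fin N => Good f))
            ⊆ (Finset.univ.filter (fun f : Fin p → Fin N × Fin N => (idx f).card ≤ 6 * k)) := by
          intro f hf
          simp only [Finset.mem_filter, Finset.mem_univ, true_and] at hf ⊢
          have := good_idx_card hf
          omega
        exact_mod_cast Nat.cast_le.mpr (Finset.card_le_card hsub)
    _ ≤ ((N.choose (6 * k) * ((6 * k) * (6 * k)) ^ p : ℕ) : ℝ) * Cφ ^ p := by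
        refine mul_le_mul_of_nonneg_right ?_ hCp
        exact_mod_cast card_filter_idx_le (6 * k) hkN
    _ = (N.choose (6 * k) : ℝ) * ((6 * k) * (6 * k) : ℕ) ^ p * Cφ ^ p := by
        push_cast; ring

end N

lemma exp_facts : (2:ℝ) ≤ Real.exp 1 ∧ (36:ℝ) ≤ Real.exp 1 ^ 7 ∧ Real.exp 14 = Real.exp 1 ^ 14 := by
  have he1 : (2:ℝ) ≤ Real.exp 1 := by
    have := Real.exp_one_gt_d9; linarith
  refine ⟨he1, ?_, ?_⟩
  · calc (36:ℝ) ≤ 2 ^ 7 := by norm_num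
      _ ≤ Real.exp 1 ^ 7 := pow_le_pow_left₀ (by norm_num) he1 7
  · rw [← Real.exp_nat_mul]; norm_num

lemma caseA_arith (Cφ : ℝ) (hCφ : 0 ≤ Cφ) (k N : ℕ) (hk : 1 ≤ k) (hkN : 6 * k ≤ N) :
    (N:ℝ)^k * (1/(N:ℝ)^2)^(4*k) / (k.factorial : ℝ)
      * ((N.choose (6*k) : ℝ) * ((((6*k) * (6*k) : ℕ)) : ℝ)^(4*k) * Cφ^(4*k))
    ≤ (Real.exp 14 * Cφ^4)^k := by
  obtain ⟨he1, h36, hexp14⟩ := exp_facts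
  have he0 : (0:ℝ) < Real.exp 1 := Real.exp_pos 1
  have hk1 : (1:ℝ) ≤ (k:ℝ) := by exact_mod_cast hk
  have hNk : (6:ℝ) * (k:ℝ) ≤ (N:ℝ) := by exact_mod_cast hkN
  have hN0 : (0:ℝ) < (N:ℝ) := by nlinarith
  have haN : (k:ℝ) ≤ (N:ℝ) := by nlinarith
  have hF : (0:ℝ) < (k.factorial : ℝ) := by exact_mod_cast k.factorial_pos
  have hF6 : (0:ℝ) < ((6*k).factorial : ℝ) := by exact_mod_cast (6*k).factorial_pos
  have hchoose : (N.choose (6*k) : ℝ) * ((6*k).factorial : ℝ) ≤ (N:ℝ)^(6*k) := by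
    have h := Nat.descFactorial_le_pow N (6*k)
    rw [Nat.descFactorial_eq_factorial_mul_choose] at h
    have h2 := (Nat.cast_le (α := ℝ)).mpr h
    push_cast at h2
    linarith
  have hfacs := pow_self_le_exp_mul_factorial (6*k)
  have hfack := pow_self_le_exp_mul_factorial k
  set b : ℝ := ((6*k : ℕ) : ℝ) with hb
  have hb0 : 0 ≤ b := by positivity
  have hbval : b = 6 * (k:ℝ) := by rw [hb]; push_cast; ring
  -- rewrite the LHS as a single fraction
  have hM : ((((6*k) * (6*k) : ℕ)) : ℝ)^(4*k) = b^(8*k) := by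
    have hcst : (((6*k) * (6*k) : ℕ) : ℝ) = b * b := by rw [hb]; push_cast; ring
    rw [hcst, mul_pow, ← pow_add]
    congr 1
    omega
  have hsplitM : b^(8*k) = b^(6*k) * (b^k * b^k) := by
    rw [← pow_add, ← pow_add]; ring_nf
  have hbk : b^k ≤ 6^k * (k:ℝ)^k := by
    rw [hbval, mul_pow]
  have hKEY : (N:ℝ)^k * (N.choose (6*k) : ℝ) * ((((6*k) * (6*k) : ℕ)) : ℝ)^(4*k)
      ≤ (Real.exp 14)^k * (k.factorial : ℝ) * (N:ℝ)^(8*k) := by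
    refine le_of_mul_le_mul_right ?_ hF6
    calc (N:ℝ)^k * (N.choose (6*k) : ℝ) * ((((6*k) * (6*k) : ℕ)) : ℝ)^(4*k)
          * ((6*k).factorial : ℝ)
        = ((N.choose (6*k) : ℝ) * ((6*k).factorial : ℝ)) * (b^(8*k) * (N:ℝ)^k) := by
          rw [hM]; ring
      _ ≤ (N:ℝ)^(6*k) * (b^(8*k) * (N:ℝ)^k) := by
          refine mul_le_mul_of_nonneg_right hchoose (by positivity)
      _ = (N:ℝ)^(6*k) * (N:ℝ)^k * (b^(6*k) * (b^k * b^k)) := by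
          rw [← hsplitM]; ring
      _ ≤ (N:ℝ)^(6*k) * (N:ℝ)^k *
            ((Real.exp 1 ^ (6*k) * ((6*k).factorial : ℝ)) *
              ((6^k * (k:ℝ)^k) * (6^k * (k:ℝ)^k))) := by
          have h1 : b^(6*k) * (b^k * b^k)
              ≤ (Real.exp 1 ^ (6*k) * ((6*k).factorial : ℝ)) *
                  ((6^k * (k:ℝ)^k) * (6^k * (k:ℝ)^k)) := by
            have hb6 : b^(6*k) ≤ Real.exp 1 ^ (6*k) * ((6*k).factorial : ℝ) := hfacs
            have hbb : b^k * b^k ≤ (6^k * (k:ℝ)^k) * (6^k * (k:ℝ)^k) := by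
              have := mul_le_mul hbk hbk (by positivity) (by positivity)
              exact this
            exact mul_le_mul hb6 hbb (by positivity) (by positivity)
          exact mul_le_mul_of_nonneg_left h1 (by positivity)
      _ ≤ (N:ℝ)^(6*k) * (N:ℝ)^k *
            ((Real.exp 1 ^ (6*k) * ((6*k).factorial : ℝ)) *
              ((6^k * (Real.exp 1 ^ k * (k.factorial : ℝ))) * (6^k * (N:ℝ)^k))) := by
          have h1 : (k:ℝ)^k ≤ Real.exp 1 ^ k * (k.factorial : ℝ) := hfack
          have h2 : (k:ℝ)^k ≤ (N:ℝ)^k := pow_le_pow_left₀ (by positivity) haN k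
          gcongr
      _ = (36^k * Real.exp 1 ^ (7*k)) * (k.factorial : ℝ) *
            ((N:ℝ)^(6*k) * (N:ℝ)^k * (N:ℝ)^k) * ((6*k).factorial : ℝ) := by
          rw [show (36:ℝ)^k = 6^k * 6^k by rw [← mul_pow]; norm_num,
            show Real.exp 1 ^ (7*k) = Real.exp 1 ^ (6*k) * Real.exp 1 ^ k by
              rw [← pow_add]; ring_nf]
          ring
      _ ≤ ((Real.exp 1 ^ 7)^k * Real.exp 1 ^ (7*k)) * (k.factorial : ℝ) *
            ((N:ℝ)^(6*k) * (N:ℝ)^k * (N:ℝ)^k) * ((6*k).factorial : ℝ) := by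
          have : (36:ℝ)^k ≤ (Real.exp 1 ^ 7)^k := pow_le_pow_left₀ (by norm_num) h36 k
          gcongr
      _ = (Real.exp 14)^k * (k.factorial : ℝ) * (N:ℝ)^(8*k) * ((6*k).factorial : ℝ) := by
          rw [hexp14, show ((Real.exp 1 ^ 7)^k * Real.exp 1 ^ (7*k)) = (Real.exp 1 ^ 14)^k by
            rw [← pow_mul, ← pow_mul, ← pow_add]; ring_nf,
            show (N:ℝ)^(6*k) * (N:ℝ)^k * (N:ℝ)^k = (N:ℝ)^(8*k) by
              rw [← pow_add, ← pow_add]; ring_nf]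
  -- conclude
  have hrw : (N:ℝ)^k * (1/(N:ℝ)^2)^(4*k) / (k.factorial : ℝ)
      * ((N.choose (6*k) : ℝ) * ((((6*k) * (6*k) : ℕ)) : ℝ)^(4*k) * Cφ^(4*k))
      = ((N:ℝ)^k * (N.choose (6*k) : ℝ) * ((((6*k) * (6*k) : ℕ)) : ℝ)^(4*k) * Cφ^(4*k))
        / ((k.factorial : ℝ) * (N:ℝ)^(8*k)) := by
    rw [show (1/(N:ℝ)^2)^(4*k) = 1/(N:ℝ)^(8*k) by
      rw [div_pow, one_pow, ← pow_mul]; ring_nf]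
    field_simp
  rw [hrw, div_le_iff₀ (by positivity)]
  have hRHS : (Real.exp 14 * Cφ^4)^k = (Real.exp 14)^k * Cφ^(4*k) := by
    rw [mul_pow, ← pow_mul]
  rw [hRHS]
  calc (N:ℝ)^k * (N.choose (6*k) : ℝ) * ((((6*k) * (6*k) : ℕ)) : ℝ)^(4*k) * Cφ^(4*k)
      = ((N:ℝ)^k * (N.choose (6*k) : ℝ) * ((((6*k) * (6*k) : ℕ)) : ℝ)^(4*k)) * Cφ^(4*k) := by
        ring
    _ ≤ ((Real.exp 14)^k * (k.factorial : ℝ) * (N:ℝ)^(8*k)) * Cφ^(4*k) := by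
        exact mul_le_mul_of_nonneg_right hKEY (by positivity)
    _ = (Real.exp 14)^k * Cφ^(4*k) * ((k.factorial : ℝ) * (N:ℝ)^(8*k)) := by ring

lemma caseB_arith (Cφ : ℝ) (hCφ : 0 ≤ Cφ) (k N : ℕ) (hk : 1 ≤ k) (hNk : N < 6 * k) :
    ((N:ℝ) * Cφ^4)^k / (k.factorial : ℝ) ≤ (Real.exp 1 * 8 * Cφ^4)^k := by
  obtain ⟨he1, _, _⟩ := exp_facts
  have hF : (0:ℝ) < (k.factorial : ℝ) := by exact_mod_cast k.factorial_pos
  have hN6k : (N:ℝ) ≤ 6 * (k:ℝ) := by exact_mod_cast Nat.le_of_lt hNk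
  have hfack := pow_self_le_exp_mul_factorial k
  rw [div_le_iff₀ hF]
  calc ((N:ℝ) * Cφ^4)^k = (N:ℝ)^k * (Cφ^4)^k := mul_pow _ _ k
    _ ≤ (6 * (k:ℝ))^k * (Cφ^4)^k := by
        refine mul_le_mul_of_nonneg_right (pow_le_pow_left₀ (by positivity) hN6k k) (by positivity)
    _ = 6^k * (k:ℝ)^k * (Cφ^4)^k := by rw [mul_pow]
    _ ≤ 6^k * (Real.exp 1 ^ k * (k.factorial : ℝ)) * (Cφ^4)^k := by
        refine mul_le_mul_of_nonneg_right (mul_le_mul_of_nonneg_left hfack (by positivity))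
          (by positivity)
    _ = (6 * Real.exp 1)^k * (Cφ^4)^k * (k.factorial : ℝ) := by
        rw [mul_pow]; ring
    _ ≤ (Real.exp 1 * 8)^k * (Cφ^4)^k * (k.factorial : ℝ) := by
        have h68 : (6:ℝ) * Real.exp 1 ≤ Real.exp 1 * 8 := by nlinarith
        refine mul_le_mul_of_nonneg_right (mul_le_mul_of_nonneg_right
          (pow_le_pow_left₀ (by positivity) h68 k) (by positivity)) (by positivity)
    _ = (Real.exp 1 * 8 * Cφ^4)^k * (k.factorial : ℝ) := by rw [mul_pow, mul_pow, mul_pow]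

end Stmt3Aux

/-- Strengthened exponential law of large numbers (fourth power): for a probability
measure `ρ̄` on `ℝ^d` and bounded `φ` with `∫∫ φ dρ̄ dρ̄ = 0` and `‖φ‖_∞` small enough
(`e¹⁴‖φ‖⁴_∞ < 1` and `8e‖φ‖⁴_∞ < 1`), there is a finite constant `C`, independent of
`N`, such that `∫ exp(N |⟨φ, μ_N ⊗ μ_N⟩|⁴) dρ̄^{⊗N} ≤ C` for all `N ≥ 2`. -/
theorem stmt3 (d : ℕ) (ρ : Measure (Fin d → ℝ)) [IsProbabilityMeasure ρ]
    (φ : (Fin d → ℝ) → (Fin d → ℝ) → ℝ) (hφm : Measurable (Function.uncurry φ))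
    (Cφ : ℝ) (hCφ : 0 ≤ Cφ) (hφb : ∀ x y, |φ x y| ≤ Cφ)
    (hcanc : ∫ y, ∫ z, φ y z ∂ρ ∂ρ = 0)
    (hα : Real.exp 14 * Cφ ^ 4 < 1) (hβ : Real.exp 1 * 8 * Cφ ^ 4 < 1) :
    ∃ C : ℝ, ∀ N : ℕ, 2 ≤ N →
      ∫⁻ x : Fin N → (Fin d → ℝ),
          ENNReal.ofReal
            (Real.exp ((N : ℝ) *
              |(1 / (N : ℝ) ^ 2) * ∑ i : Fin N, ∑ j : Fin N, φ (x i) (x j)| ^ 4))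
        ∂(Measure.pi fun _ : Fin N => ρ)
      ≤ ENNReal.ofReal C := by
  classical
  set θ : ℝ := max (Real.exp 14 * Cφ ^ 4) (Real.exp 1 * 8 * Cφ ^ 4) with hθ
  have hθ0 : 0 ≤ θ := le_max_of_le_right (by positivity)
  have hθ1 : θ < 1 := max_lt hα hβ
  refine ⟨(1 - θ)⁻¹, fun N hN => ?_⟩
  set μN : Measure (Fin N → (Fin d → ℝ)) := Measure.pi fun _ : Fin N => ρ with hμN
  set S : (Fin N → (Fin d → ℝ)) → ℝ := fun x => ∑ i, ∑ j, φ (x i) (x j) with hS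
  have hSmeas : Measurable S := by
    apply Finset.measurable_sum
    intro i _
    apply Finset.measurable_sum
    intro j _
    exact Stmt3Aux.meas_pair hφm i j
  set m : (Fin N → (Fin d → ℝ)) → ℝ := fun x => 1/(N:ℝ)^2 * S x with hmdef
  have hmmeas : Measurable m := hSmeas.const_mul _
  have hN0 : (0:ℝ) < (N:ℝ) := by
    have : 0 < N := by omega
    exact_mod_cast this
  have hmb : ∀ x, |m x| ≤ Cφ := by
    intro x
    have hSb : |S x| ≤ (N:ℝ)^2 * Cφ := by
      rw [hS]
      calc |∑ i, ∑ j, φ (x i) (x j)| ≤ ∑ i, |∑ j, φ (x i) (x j)| :=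
            Finset.abs_sum_le_sum_abs _ _
        _ ≤ ∑ i : Fin N, ∑ j : Fin N, |φ (x i) (x j)| :=
            Finset.sum_le_sum fun i _ => Finset.abs_sum_le_sum_abs _ _
        _ ≤ ∑ _i : Fin N, ∑ _j : Fin N, Cφ :=
            Finset.sum_le_sum fun i _ => Finset.sum_le_sum fun j _ => hφb _ _
        _ = (N:ℝ)^2 * Cφ := by
            simp [Finset.sum_const, Finset.card_univ, nsmul_eq_mul]
            ring
    calc |m x| = (1/(N:ℝ)^2) * |S x| := by
          rw [hmdef]
          rw [abs_mul, abs_of_nonneg (by positivity : (0:ℝ) ≤ 1/(N:ℝ)^2)]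
      _ ≤ (1/(N:ℝ)^2) * ((N:ℝ)^2 * Cφ) := by
          exact mul_le_mul_of_nonneg_left hSb (by positivity)
      _ = Cφ := by field_simp
  have habs : ∀ x, |m x| ^ 4 = m x ^ 4 := fun x => by
    rw [← abs_pow, abs_of_nonneg (by positivity : (0:ℝ) ≤ m x ^ 4)]
  have hexp : ∀ x, ENNReal.ofReal (Real.exp ((N:ℝ) * |m x| ^ 4))
      = ∑' k : ℕ, ENNReal.ofReal (((N:ℝ) * m x ^ 4) ^ k / (k.factorial : ℝ)) := by
    intro x
    rw [habs x]
    have hser : Real.exp ((N:ℝ) * m x ^ 4)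
        = ∑' k : ℕ, ((N:ℝ) * m x ^ 4) ^ k / (k.factorial : ℝ) := by
      rw [Real.exp_eq_exp_ℝ, NormedSpace.exp_eq_tsum ℝ]
      exact tsum_congr fun n => by rw [smul_eq_mul, ← div_eq_inv_mul]
    rw [hser]
    exact ENNReal.ofReal_tsum_of_nonneg (fun k => by positivity)
      (Real.summable_pow_div_factorial _)
  have hgmeas : ∀ k : ℕ, Measurable (fun x => ((N:ℝ) * m x ^ 4) ^ k / (k.factorial : ℝ)) :=
    fun k => (((hmmeas.pow_const 4).const_mul _).pow_const k).div_const _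
  have hm4 : ∀ x, m x ^ 4 ≤ Cφ ^ 4 := fun x => by
    rw [← habs x]
    exact pow_le_pow_left₀ (abs_nonneg _) (hmb x) 4
  have hgb : ∀ (k : ℕ) x, |((N:ℝ) * m x ^ 4) ^ k / (k.factorial : ℝ)|
      ≤ ((N:ℝ) * Cφ^4)^k / (k.factorial : ℝ) := by
    intro k x
    have h1 : (0:ℝ) ≤ (N:ℝ) * m x ^ 4 := by positivity
    have h2 : ((N:ℝ) * m x ^ 4) ^ k ≤ ((N:ℝ) * Cφ^4)^k :=
      pow_le_pow_left₀ h1 (mul_le_mul_of_nonneg_left (hm4 x) (by positivity)) k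
    calc |((N:ℝ) * m x ^ 4) ^ k / (k.factorial : ℝ)|
        = ((N:ℝ) * m x ^ 4) ^ k / (k.factorial : ℝ) := abs_of_nonneg (by positivity)
      _ ≤ ((N:ℝ) * Cφ^4)^k / (k.factorial : ℝ) := by
          have hF : (0:ℝ) < (k.factorial : ℝ) := by exact_mod_cast k.factorial_pos
          gcongr
  have hgint : ∀ k : ℕ, Integrable (fun x => ((N:ℝ) * m x ^ 4) ^ k / (k.factorial : ℝ)) μN :=
    fun k => Stmt3Aux.integrable_of_bound μN _ (hgmeas k) _ (hgb k)
  -- per-term bound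
  have hterm : ∀ k : ℕ,
      (∫ x, ((N:ℝ) * m x ^ 4) ^ k / (k.factorial : ℝ) ∂μN) ≤ θ ^ k := by
    intro k
    rcases Nat.eq_zero_or_pos k with hk0 | hk1
    · subst hk0
      simp
    by_cases hcase : 6 * k ≤ N
    · -- small k: moment bound
      have hmom := Stmt3Aux.moment_bound (ρ := ρ) hφm Cφ hCφ hφb hcanc k hcase
      have hrw : ∀ x, ((N:ℝ) * m x ^ 4) ^ k / (k.factorial : ℝ)
          = ((N:ℝ)^k * (1/(N:ℝ)^2)^(4*k) / (k.factorial : ℝ)) * S x ^ (4*k) := by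
        intro x
        rw [hmdef]
        simp only []
        rw [mul_pow ((1:ℝ)/(N:ℝ)^2) (S x) 4, mul_pow, mul_pow, ← pow_mul, ← pow_mul]
        ring
      have hintS : Integrable (fun x => S x ^ (4*k)) μN := by
        refine Stmt3Aux.integrable_of_bound μN _ (hSmeas.pow_const _) (((N:ℝ)^2*Cφ)^(4*k)) ?_
        intro x
        rw [abs_pow]
        exact pow_le_pow_left₀ (abs_nonneg _)
          (by
            have hSb : |S x| ≤ (N:ℝ)^2 * Cφ := by
              have := hmb x
              rw [hmdef] at this
              simp only [abs_mul] at this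
              rw [abs_of_nonneg (by positivity : (0:ℝ) ≤ 1/(N:ℝ)^2)] at this
              calc |S x| = ((N:ℝ)^2) * (1/(N:ℝ)^2 * |S x|) := by field_simp
                _ ≤ ((N:ℝ)^2) * Cφ := mul_le_mul_of_nonneg_left this (by positivity)
            exact hSb) _
      have hc0 : (0:ℝ) ≤ (N:ℝ)^k * (1/(N:ℝ)^2)^(4*k) / (k.factorial : ℝ) := by positivity
      calc (∫ x, ((N:ℝ) * m x ^ 4) ^ k / (k.factorial : ℝ) ∂μN)
          = ∫ x, ((N:ℝ)^k * (1/(N:ℝ)^2)^(4*k) / (k.factorial : ℝ)) * S x ^ (4*k) ∂μN := by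
            exact integral_congr_ae (Filter.Eventually.of_forall hrw)
        _ = ((N:ℝ)^k * (1/(N:ℝ)^2)^(4*k) / (k.factorial : ℝ)) * ∫ x, S x ^ (4*k) ∂μN :=
            integral_const_mul _ _
        _ ≤ ((N:ℝ)^k * (1/(N:ℝ)^2)^(4*k) / (k.factorial : ℝ)) *
              ((N.choose (6*k) : ℝ) * ((((6*k) * (6*k) : ℕ)) : ℝ)^(4*k) * Cφ^(4*k)) := by
            refine mul_le_mul_of_nonneg_left ?_ hc0
            exact hmom
        _ ≤ (Real.exp 14 * Cφ^4)^k := Stmt3Aux.caseA_arith Cφ hCφ k N hk1 hcase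
        _ ≤ θ ^ k := pow_le_pow_left₀ (by positivity) (le_max_left _ _) k
    · -- large k: crude bound
      have hNk : N < 6 * k := by omega
      calc (∫ x, ((N:ℝ) * m x ^ 4) ^ k / (k.factorial : ℝ) ∂μN)
          ≤ ∫ _x, ((N:ℝ) * Cφ^4)^k / (k.factorial : ℝ) ∂μN := by
            refine integral_mono (hgint k) (integrable_const _) ?_
            intro x
            exact (le_abs_self _).trans (hgb k x)
        _ = ((N:ℝ) * Cφ^4)^k / (k.factorial : ℝ) := by
            rw [integral_const]
            simp [hμN]
        _ ≤ (Real.exp 1 * 8 * Cφ^4)^k := Stmt3Aux.caseB_arith Cφ hCφ k N hk1 hNk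
        _ ≤ θ ^ k := pow_le_pow_left₀ (by positivity) (le_max_right _ _) k
  -- assemble
  calc ∫⁻ x : Fin N → (Fin d → ℝ),
        ENNReal.ofReal
          (Real.exp ((N : ℝ) *
            |(1 / (N : ℝ) ^ 2) * ∑ i : Fin N, ∑ j : Fin N, φ (x i) (x j)| ^ 4)) ∂μN
      = ∫⁻ x, ∑' k : ℕ, ENNReal.ofReal (((N:ℝ) * m x ^ 4) ^ k / (k.factorial : ℝ)) ∂μN := by
        refine lintegral_congr fun x => ?_
        exact hexp x
    _ = ∑' k : ℕ, ∫⁻ x, ENNReal.ofReal (((N:ℝ) * m x ^ 4) ^ k / (k.factorial : ℝ)) ∂μN :=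
        lintegral_tsum fun k => ((hgmeas k).ennreal_ofReal).aemeasurable
    _ ≤ ∑' k : ℕ, ENNReal.ofReal (θ ^ k) := by
        refine ENNReal.tsum_le_tsum fun k => ?_
        rw [← MeasureTheory.ofReal_integral_eq_lintegral_ofReal (hgint k)
          (Filter.Eventually.of_forall fun x => by positivity)]
        exact ENNReal.ofReal_le_ofReal (hterm k)
    _ = ENNReal.ofReal (∑' k : ℕ, θ ^ k) :=
        (ENNReal.ofReal_tsum_of_nonneg (fun k => pow_nonneg hθ0 k)
          (summable_geometric_of_lt_one hθ0 hθ1)).symm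
    _ = ENNReal.ofReal ((1 - θ)⁻¹) := by
        rw [tsum_geometric_of_lt_one hθ0 hθ1]
end

section
/- Let E be a separable Banach space and S : E → L⁰(Ω) a linear continuous map (with convergence in probability). Suppose there exists a random variable C(ω) ≥ 0 such that for every φ ∈ E, |S(φ)(ω)| ≤ C(ω)‖φ‖_E for ℙ-a.e. ω. Then there exists a measurable map ω ↦ S(ω) from (Ω, 𝓕, ℙ) into the dual space E′ such that ⟨S(ω), φ⟩ = S(φ)(ω) almost surely for each φ ∈ E. -/
open MeasureTheory Filter Topology

/-- Pathwise realization of a linear continuous map into `L⁰(Ω)` (Flandoli):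
if `S : E → L⁰(Ω)` is linear and continuous in probability, and
`|S(φ)(ω)| ≤ C(ω)‖φ‖` a.s. for each `φ`, then there is a measurable map
`ω ↦ S(ω) ∈ E′` with `⟨S(ω), φ⟩ = S(φ)(ω)` a.s. for each `φ`. -/
theorem stmt15 {E : Type*} [NormedAddCommGroup E] [NormedSpace ℝ E]
    [TopologicalSpace.SeparableSpace E]
    {Ω : Type*} [MeasurableSpace Ω] (P : Measure Ω) [IsProbabilityMeasure P]
    (S : E → Ω → ℝ) (hmeas : ∀ φ, Measurable (S φ))
    (hadd : ∀ φ ψ, ∀ᵐ ω ∂P, S (φ + ψ) ω = S φ ω + S ψ ω)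
    (hsmul : ∀ (c : ℝ) (φ), ∀ᵐ ω ∂P, S (c • φ) ω = c * S φ ω)
    (hcont : ∀ (φs : ℕ → E) (φ : E), Tendsto φs atTop (𝓝 φ) →
      ∀ ε : ℝ, 0 < ε →
        Tendsto (fun n => P {ω | ε ≤ |S (φs n) ω - S φ ω|}) atTop (𝓝 0))
    (C : Ω → ℝ) (hC0 : ∀ ω, 0 ≤ C ω)
    (hC : ∀ φ, ∀ᵐ ω ∂P, |S φ ω| ≤ C ω * ‖φ‖) :
    ∃ T : Ω → (E →L[ℝ] ℝ),
      (∀ φ, Measurable fun ω => T ω φ) ∧ ∀ φ, ∀ᵐ ω ∂P, T ω φ = S φ ω := by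
  classical
  letI : Module ℚ E := Module.compHom E (Rat.castHom ℝ)
  have hqsmul : ∀ (q : ℚ) (x : E), q • x = (q : ℝ) • x := fun q x => rfl
  have : Nonempty E := ⟨0⟩
  set u : ℕ → E := TopologicalSpace.denseSeq E with hu
  have hdense : DenseRange u := TopologicalSpace.denseRange_denseSeq E
  set D : Submodule ℚ E := Submodule.span ℚ (Set.range u) with hD
  haveI : Countable D := inferInstance
  have hDdense : Dense (D : Set E) :=
    hdense.mono Submodule.subset_span
  -- approximating sequences in D
  have happrox : ∀ φ : E, ∀ n : ℕ, ∃ d : E, d ∈ D ∧ ‖d - φ‖ < 1 / (n + 1) := by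
    intro φ n
    have hpos : (0 : ℝ) < 1 / (n + 1) := by positivity
    obtain ⟨d, hd, hdist⟩ := Metric.mem_closure_iff.1 (hDdense.closure_eq ▸ Set.mem_univ φ :
      φ ∈ closure (D : Set E)) _ hpos
    exact ⟨d, hd, by rwa [← dist_eq_norm, dist_comm]⟩
  choose a haD haclose using happrox
  have hatend : ∀ φ, Tendsto (a φ) atTop (𝓝 φ) := by
    intro φ
    rw [tendsto_iff_norm_sub_tendsto_zero]
    exact squeeze_zero (fun n => norm_nonneg _) (fun n => (haclose φ n).le)
      tendsto_one_div_add_atTop_nhds_zero_nat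
  -- the good set
  set G : Set Ω := {ω | (∀ d₁ d₂ : D, S (↑d₁ + ↑d₂) ω = S ↑d₁ ω + S ↑d₂ ω)
    ∧ (∀ (q : ℚ) (d : D), S ((q : ℝ) • ↑d) ω = (q : ℝ) * S ↑d ω)
    ∧ (∃ M : ℕ, ∀ d : D, |S ↑d ω| ≤ M * ‖(d : E)‖)} with hG
  have hGmeas : MeasurableSet G := by
    have h1 : MeasurableSet {ω | ∀ d₁ d₂ : D, S (↑d₁ + ↑d₂) ω = S ↑d₁ ω + S ↑d₂ ω} := by
      have : {ω | ∀ d₁ d₂ : D, S (↑d₁ + ↑d₂) ω = S ↑d₁ ω + S ↑d₂ ω}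
          = ⋂ (d₁ : D) (d₂ : D), {ω | S (↑d₁ + ↑d₂) ω = S ↑d₁ ω + S ↑d₂ ω} := by
        ext ω; simp [Set.mem_iInter]
      rw [this]
      exact MeasurableSet.iInter fun d₁ => MeasurableSet.iInter fun d₂ =>
        measurableSet_eq_fun (hmeas _) ((hmeas _).add (hmeas _))
    have h2 : MeasurableSet {ω | ∀ (q : ℚ) (d : D), S ((q : ℝ) • ↑d) ω = (q : ℝ) * S ↑d ω} := by
      have : {ω | ∀ (q : ℚ) (d : D), S ((q : ℝ) • ↑d) ω = (q : ℝ) * S ↑d ω}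
          = ⋂ (q : ℚ) (d : D), {ω | S ((q : ℝ) • ↑d) ω = (q : ℝ) * S ↑d ω} := by
        ext ω; simp [Set.mem_iInter]
      rw [this]
      exact MeasurableSet.iInter fun q => MeasurableSet.iInter fun d =>
        measurableSet_eq_fun (hmeas _) ((hmeas _).const_mul _)
    have h3 : MeasurableSet {ω | ∃ M : ℕ, ∀ d : D, |S ↑d ω| ≤ M * ‖(d : E)‖} := by
      have : {ω | ∃ M : ℕ, ∀ d : D, |S ↑d ω| ≤ M * ‖(d : E)‖}
          = ⋃ (M : ℕ), ⋂ (d : D), {ω | |S ↑d ω| ≤ M * ‖(d : E)‖} := by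
        ext ω; simp [Set.mem_iUnion, Set.mem_iInter]
      rw [this]
      exact MeasurableSet.iUnion fun M => MeasurableSet.iInter fun d =>
        measurableSet_le (hmeas _).abs measurable_const
    have : G = _ ∩ (_ ∩ _) := rfl
    exact (h1.inter (h2.inter h3))
  have hGae : ∀ᵐ ω ∂P, ω ∈ G := by
    have h1 : ∀ᵐ ω ∂P, ∀ d₁ d₂ : D, S (↑d₁ + ↑d₂) ω = S ↑d₁ ω + S ↑d₂ ω :=
      (ae_all_iff.2 fun d₁ => ae_all_iff.2 fun d₂ => hadd ↑d₁ ↑d₂)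
    have h2 : ∀ᵐ ω ∂P, ∀ (q : ℚ) (d : D), S ((q : ℝ) • ↑d) ω = (q : ℝ) * S ↑d ω :=
      (ae_all_iff.2 fun q => ae_all_iff.2 fun d => hsmul (q : ℝ) ↑d)
    have h3 : ∀ᵐ ω ∂P, ∃ M : ℕ, ∀ d : D, |S ↑d ω| ≤ M * ‖(d : E)‖ := by
      have hc : ∀ᵐ ω ∂P, ∀ d : D, |S ↑d ω| ≤ C ω * ‖(d : E)‖ :=
        ae_all_iff.2 fun d => hC ↑d
      filter_upwards [hc] with ω hω
      refine ⟨⌈C ω⌉₊, fun d => (hω d).trans ?_⟩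
      exact mul_le_mul_of_nonneg_right (Nat.le_ceil _) (norm_nonneg _)
    filter_upwards [h1, h2, h3] with ω hω1 hω2 hω3
    exact ⟨hω1, hω2, hω3⟩
  -- Lipschitz estimate on D
  have hlip : ∀ ω, ω ∈ G → ∀ M : ℕ, (∀ d : D, |S ↑d ω| ≤ M * ‖(d : E)‖) →
      ∀ d₁ d₂ : D, |S ↑d₁ ω - S ↑d₂ ω| ≤ M * ‖(d₁ : E) - ↑d₂‖ := by
    intro ω hω M hM d₁ d₂
    have hadd' := hω.1 (d₁ - d₂) d₂
    have hco : ((d₁ - d₂ : D) : E) + ↑d₂ = ↑d₁ := by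
      push_cast; abel
    rw [hco] at hadd'
    have : S ↑d₁ ω - S ↑d₂ ω = S ↑(d₁ - d₂) ω := by linarith
    rw [this]
    simpa using hM (d₁ - d₂)
  -- convergence of the approximating values
  have hcauchy : ∀ ω, ω ∈ G → ∀ φ : E, CauchySeq (fun n => S (a φ n) ω) := by
    intro ω hω φ
    obtain ⟨M, hM⟩ := hω.2.2
    refine cauchySeq_of_le_tendsto_0 (fun N => (M : ℝ) * (2 * (1 / (N + 1)))) ?_ ?_
    · intro n m N hn hm
      rw [Real.dist_eq]
      have h1 : |S (a φ n) ω - S (a φ m) ω| ≤ M * ‖a φ n - a φ m‖ :=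
        hlip ω hω M hM ⟨a φ n, haD φ n⟩ ⟨a φ m, haD φ m⟩
      refine h1.trans (mul_le_mul_of_nonneg_left ?_ (by positivity))
      have h2 : ‖a φ n - a φ m‖ ≤ ‖a φ n - φ‖ + ‖a φ m - φ‖ := by
        have := norm_sub_le (a φ n - φ) (a φ m - φ)
        simpa [sub_sub_sub_cancel_right] using this
      have hn' : ‖a φ n - φ‖ ≤ 1 / (N + 1) :=
        (haclose φ n).le.trans (by
          apply one_div_le_one_div_of_le (by positivity)
          exact_mod_cast (add_le_add_iff_right 1).2 (Nat.cast_le.2 hn))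
      have hm' : ‖a φ m - φ‖ ≤ 1 / (N + 1) :=
        (haclose φ m).le.trans (by
          apply one_div_le_one_div_of_le (by positivity)
          exact_mod_cast (add_le_add_iff_right 1).2 (Nat.cast_le.2 hm))
      linarith
    · have := tendsto_one_div_add_atTop_nhds_zero_nat.const_mul (2 : ℝ)
      have := this.const_mul (M : ℝ)
      simpa [mul_assoc] using this
  set g : Ω → E → ℝ := fun ω φ => limUnder atTop (fun n => S (a φ n) ω) with hg
  have hgt : ∀ ω, ω ∈ G → ∀ φ : E,
      Tendsto (fun n => S (a φ n) ω) atTop (𝓝 (g ω φ)) := by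
    intro ω hω φ
    obtain ⟨L, hL⟩ := cauchySeq_tendsto_of_complete (hcauchy ω hω φ)
    have : g ω φ = L := hL.limUnder_eq
    rw [this]; exact hL
  -- limits along arbitrary sequences in D
  have hgen : ∀ ω, ω ∈ G → ∀ (φ : E) (b : ℕ → E), (∀ n, b n ∈ D) →
      Tendsto b atTop (𝓝 φ) → Tendsto (fun n => S (b n) ω) atTop (𝓝 (g ω φ)) := by
    intro ω hω φ b hb hbt
    obtain ⟨M, hM⟩ := hω.2.2
    have hdiff : Tendsto (fun n => S (b n) ω - S (a φ n) ω) atTop (𝓝 0) := by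
      refine squeeze_zero_norm (f := fun n => S (b n) ω - S (a φ n) ω)
        (a := fun n => (M : ℝ) * ‖b n - a φ n‖) ?_ ?_
      · intro n
        simpa [Real.norm_eq_abs] using hlip ω hω M hM ⟨b n, hb n⟩ ⟨a φ n, haD φ n⟩
      · have h0 : Tendsto (fun n => b n - a φ n) atTop (𝓝 0) := by
          have := hbt.sub (hatend φ)
          simpa using this
        have := (tendsto_zero_iff_norm_tendsto_zero.1 h0).const_mul (M : ℝ)
        simpa using this
    have := hdiff.add (hgt ω hω φ)
    simpa using this
  -- values on D
  have hgD : ∀ ω, ω ∈ G → ∀ d : D, g ω ↑d = S ↑d ω := by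
    intro ω hω d
    have h1 : Tendsto (fun _ : ℕ => S (↑d : E) ω) atTop (𝓝 (g ω ↑d)) :=
      hgen ω hω ↑d (fun _ => ↑d) (fun _ => d.2) tendsto_const_nhds
    exact tendsto_nhds_unique h1 tendsto_const_nhds
  -- additivity
  have hgadd : ∀ ω, ω ∈ G → ∀ φ ψ : E, g ω (φ + ψ) = g ω φ + g ω ψ := by
    intro ω hω φ ψ
    have h1 : Tendsto (fun n => S (a φ n + a ψ n) ω) atTop (𝓝 (g ω (φ + ψ))) :=
      hgen ω hω (φ + ψ) (fun n => a φ n + a ψ n)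
        (fun n => D.add_mem (haD φ n) (haD ψ n)) ((hatend φ).add (hatend ψ))
    have h2 : Tendsto (fun n => S (a φ n + a ψ n) ω) atTop (𝓝 (g ω φ + g ω ψ)) := by
      have heq : ∀ n, S (a φ n + a ψ n) ω = S (a φ n) ω + S (a ψ n) ω :=
        fun n => hω.1 ⟨a φ n, haD φ n⟩ ⟨a ψ n, haD ψ n⟩
      simp only [heq]
      exact (hgt ω hω φ).add (hgt ω hω ψ)
    exact tendsto_nhds_unique h1 h2
  -- homogeneity
  have hgsmul : ∀ ω, ω ∈ G → ∀ (c : ℝ) (φ : E), g ω (c • φ) = c * g ω φ := by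
    intro ω hω c φ
    have hq : ∀ n : ℕ, ∃ q : ℚ, |c - (q : ℝ)| < 1 / (n + 1) :=
      fun n => exists_rat_near c (by positivity)
    choose q hqc using hq
    have hqt : Tendsto (fun n => (q n : ℝ)) atTop (𝓝 c) := by
      rw [tendsto_iff_norm_sub_tendsto_zero]
      refine squeeze_zero (fun n => norm_nonneg _) (fun n => ?_)
        tendsto_one_div_add_atTop_nhds_zero_nat
      have := (hqc n).le
      rwa [Real.norm_eq_abs, abs_sub_comm]
    have h1 : Tendsto (fun n => S ((q n : ℝ) • a φ n) ω) atTop (𝓝 (g ω (c • φ))) := by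
      refine hgen ω hω (c • φ) (fun n => (q n : ℝ) • a φ n) (fun n => ?_)
        (hqt.smul (hatend φ))
      have := D.smul_mem (q n) (haD φ n)
      rwa [hqsmul] at this
    have h2 : Tendsto (fun n => S ((q n : ℝ) • a φ n) ω) atTop (𝓝 (c * g ω φ)) := by
      have heq : ∀ n, S ((q n : ℝ) • a φ n) ω = (q n : ℝ) * S (a φ n) ω :=
        fun n => hω.2.1 (q n) ⟨a φ n, haD φ n⟩
      simp only [heq]
      exact hqt.mul (hgt ω hω φ)
    exact tendsto_nhds_unique h1 h2
  -- bound
  have hgbdd : ∀ ω, ω ∈ G → ∀ M : ℕ, (∀ d : D, |S ↑d ω| ≤ M * ‖(d : E)‖) →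
      ∀ φ : E, |g ω φ| ≤ M * ‖φ‖ := by
    intro ω hω M hM φ
    have h1 : Tendsto (fun n => |S (a φ n) ω|) atTop (𝓝 |g ω φ|) :=
      (hgt ω hω φ).abs
    have h2 : Tendsto (fun n => (M : ℝ) * ‖a φ n‖) atTop (𝓝 ((M : ℝ) * ‖φ‖)) :=
      (((hatend φ).norm).const_mul (M : ℝ))
    exact le_of_tendsto_of_tendsto' h1 h2 fun n => hM ⟨a φ n, haD φ n⟩
  -- construct the functional
  have hex : ∀ ω, ∃ f : E →L[ℝ] ℝ, (ω ∈ G → ∀ φ, f φ = g ω φ) ∧ (ω ∉ G → ∀ φ, f φ = 0) := by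
    intro ω
    by_cases hω : ω ∈ G
    · obtain ⟨M, hM⟩ := hω.2.2
      refine ⟨LinearMap.mkContinuousOfExistsBound
        { toFun := g ω
          map_add' := hgadd ω hω
          map_smul' := fun c x => by simpa using hgsmul ω hω c x }
        ⟨M, fun x => by simpa [Real.norm_eq_abs] using hgbdd ω hω M hM x⟩,
        fun _ φ => rfl, fun h => absurd hω h⟩
    · exact ⟨0, fun h => absurd h hω, fun _ φ => rfl⟩
  choose T hTG hTnG using hex
  refine ⟨T, ?_, ?_⟩
  · -- measurability
    intro φ
    have hF : ∀ n : ℕ, Measurable fun ω => if ω ∈ G then S (a φ n) ω else 0 :=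
      fun n => Measurable.ite hGmeas (hmeas _) measurable_const
    refine measurable_of_tendsto_metrizable hF (tendsto_pi_nhds.2 fun ω => ?_)
    by_cases hω : ω ∈ G
    · have := hgt ω hω φ
      rw [hTG ω hω φ]
      simpa [hω] using this
    · rw [hTnG ω hω φ]
      simp [hω]
  · -- a.e. identification
    intro φ
    have haet : ∀ᵐ ω ∂P, Tendsto (fun n => S (a φ n) ω) atTop (𝓝 (T ω φ)) := by
      filter_upwards [hGae] with ω hω
      rw [hTG ω hω φ]
      exact hgt ω hω φ
    have h2 : TendstoInMeasure P (fun n ω => S (a φ n) ω) atTop (fun ω => T ω φ) :=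
      tendstoInMeasure_of_tendsto_ae (fun n => (hmeas _).aestronglyMeasurable) haet
    have hzero : ∀ ε : ℝ, 0 < ε → P {ω | ε ≤ |T ω φ - S φ ω|} = 0 := by
      intro ε hε
      have hε2 : 0 < ε / 2 := by linarith
      have hsub : ∀ n : ℕ, {ω | ε ≤ |T ω φ - S φ ω|} ⊆
          {ω | ε / 2 ≤ |S (a φ n) ω - S φ ω|} ∪ {ω | ε / 2 ≤ |S (a φ n) ω - T ω φ|} := by
        intro n ω hω
        simp only [Set.mem_setOf_eq] at hω
        by_contra hcon
        simp only [Set.mem_union, Set.mem_setOf_eq, not_or, not_le] at hcon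
        have h1 : |T ω φ - S φ ω| ≤ |S (a φ n) ω - T ω φ| + |S (a φ n) ω - S φ ω| := by
          have h := abs_add_le (T ω φ - S (a φ n) ω) (S (a φ n) ω - S φ ω)
          rw [sub_add_sub_cancel] at h
          rwa [abs_sub_comm (T ω φ) (S (a φ n) ω)] at h
        linarith [hcon.1, hcon.2]
      have hle : ∀ n : ℕ, P {ω | ε ≤ |T ω φ - S φ ω|} ≤
          P {ω | ε / 2 ≤ |S (a φ n) ω - S φ ω|} + P {ω | ε / 2 ≤ |S (a φ n) ω - T ω φ|} :=
        fun n => le_trans (measure_mono (hsub n)) (measure_union_le _ _)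
      have ht1 : Tendsto (fun n => P {ω | ε / 2 ≤ |S (a φ n) ω - S φ ω|}) atTop (𝓝 0) :=
        hcont (a φ) φ (hatend φ) (ε / 2) hε2
      have ht2 : Tendsto (fun n => P {ω | ε / 2 ≤ |S (a φ n) ω - T ω φ|}) atTop (𝓝 0) := by
        have := h2 (ENNReal.ofReal (ε / 2)) (ENNReal.ofReal_pos.2 hε2)
        refine this.congr fun n => ?_
        congr 1
        ext ω
        simp only [Set.mem_setOf_eq]
        rw [edist_dist, Real.dist_eq, ENNReal.ofReal_le_ofReal_iff (abs_nonneg _)]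
      have hsum : Tendsto (fun n => P {ω | ε / 2 ≤ |S (a φ n) ω - S φ ω|}
          + P {ω | ε / 2 ≤ |S (a φ n) ω - T ω φ|}) atTop (𝓝 0) := by
        have := ht1.add ht2
        simpa using this
      have := ge_of_tendsto hsum (Eventually.of_forall hle)
      exact le_antisymm this zero_le
    have hcover : {ω | T ω φ ≠ S φ ω} ⊆
        ⋃ k : ℕ, {ω | 1 / (k + 1 : ℝ) ≤ |T ω φ - S φ ω|} := by
      intro ω hω
      have hpos : 0 < |T ω φ - S φ ω| := abs_pos.2 (sub_ne_zero.2 hω)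
      obtain ⟨k, hk⟩ := exists_nat_one_div_lt hpos
      exact Set.mem_iUnion.2 ⟨k, hk.le⟩
    have : P {ω | T ω φ ≠ S φ ω} = 0 := by
      refine measure_mono_null hcover (measure_iUnion_null fun k => ?_)
      exact hzero _ (by positivity)
    exact this
end
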